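/- arXiv:1804.05035 — 4 statements merged into one kernel-verified Lean document; each statement's English description precedes it below -/
import Mathlib

section
/- Let d ≥ 2, ε > 0, and let X = X(A,a,b,δ) be an Engel set with 0 < a < b and 2dR − ε < 2db, where R = √(b² + (d-1)a²). Then all (2dR − ε)-clusters of X are mutually equivalent: N_X(2dR − ε) = 1. In particular this holds whenever a² ≤ εb/(d(d−1)). -/
noncomputable section
open scoped Pointwise

/-- Euclidean d-space. -/
abbrev Euc (d : ℕ) : Type := EuclideanSpace ℝ (Fin d)

/-- The 1-based standard basis vector `e_k` of `ℝ^d` (for `1 ≤ k ≤ d`). -/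
def eVec (d k : ℕ) : Euc d :=
  if h : k - 1 < d then EuclideanSpace.single ⟨k - 1, h⟩ (1 : ℝ) else 0

/-- Conditions (A1)–(A3) on the doubly-infinite integer sequence `A`. -/
def EngelSeq (d : ℕ) (A : ℤ → ℤ) : Prop :=
  (∀ i : ℤ, 1 ≤ (A i).natAbs ∧ (A i).natAbs ≤ d - 1) ∧
  (∀ i : ℤ, (A (i + (d - 1))).natAbs = (A i).natAbs) ∧
  (∀ s : ℕ, 1 ≤ s → s ≤ d - 1 → ∃ i : ℤ, 1 ≤ i ∧ i ≤ d - 1 ∧ (A i).natAbs = s)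

/-- The vector `u_i = sign(a_i) e_{|a_i|}`. -/
def engelU (d : ℕ) (A : ℤ → ℤ) (i : ℤ) : Euc d :=
  (if 0 < A i then (1 : ℝ) else -1) • eVec d (A i).natAbs

/-- The cumulative sum `u_1 + ⋯ + u_i` (with the natural convention for `i ≤ 0`,
so that `engelCum 0 = 0` and `engelCum i - engelCum (i-1) = u_i` for all `i`). -/
def engelCum (d : ℕ) (A : ℤ → ℤ) (i : ℤ) : Euc d :=
  if 0 ≤ i then ∑ j ∈ Finset.range i.toNat, engelU d A ((j : ℤ) + 1)
  else -∑ j ∈ Finset.range (-i).toNat, engelU d A (-(j : ℤ))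

/-- The translation vector placing layer `m` of an Engel set:
layer `m` lies at height `2bm`, and the horizontal shifts `δ·u_i` accumulate
according to (E3), (E4). (Integer division is floor division.) -/
def engelOffset (d : ℕ) (A : ℤ → ℤ) (b δ : ℝ) (m : ℤ) : Euc d :=
  ((2 * b) * (m : ℝ)) • eVec d d + δ • engelCum d A (m / 2)

/-- The horizontal grid `Y = 2aℤ^{d-1} × {0}` in `ℝ^d`. -/
def engelGrid (d : ℕ) (a : ℝ) : Set (Euc d) :=
  {x | ∀ j : Fin d, ((j : ℕ) < d - 1 → ∃ m : ℤ, x j = 2 * a * (m : ℝ)) ∧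
        ((j : ℕ) = d - 1 → x j = 0)}

/-- Layer `X_m` of the Engel set `X(A,a,b,δ)`. -/
def engelLayer (d : ℕ) (A : ℤ → ℤ) (a b δ : ℝ) (m : ℤ) : Set (Euc d) :=
  engelOffset d A b δ m +ᵥ engelGrid d a

/-- The Engel set `X(A,a,b,δ) = ⋃_m X_m`. -/
def engelSet (d : ℕ) (A : ℤ → ℤ) (a b δ : ℝ) : Set (Euc d) :=
  ⋃ m : ℤ, engelLayer d A a b δ m

/-- A Delone set of type `(r,R)`: every open `r`-ball contains at most one point of `X`,
and every closed `R`-ball contains at least one point of `X`. -/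
def IsDeloneSet {V : Type*} [MetricSpace V] (X : Set V) (r R : ℝ) : Prop :=
  (∀ y : V, (X ∩ Metric.ball y r).Subsingleton) ∧
  (∀ y : V, (X ∩ Metric.closedBall y R).Nonempty)

/-- The ρ-cluster of `X` at `x`. -/
def cluster {V : Type*} [MetricSpace V] (X : Set V) (x : V) (ρ : ℝ) : Set V :=
  X ∩ Metric.closedBall x ρ

/-- Equivalence of the ρ-clusters of `X` at `x` and `x'`: an isometry of the ambient
space carries the one cluster onto the other, mapping center to center. -/
def ClustersEquiv {V : Type*} [MetricSpace V] (X : Set V) (x x' : V) (ρ : ℝ) : Prop :=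
  ∃ g : V ≃ᵢ V, g x = x' ∧ g '' cluster X x ρ = cluster X x' ρ

/-- A regular system: the symmetry group of `X` acts transitively on `X`. -/
def IsRegularSystem {V : Type*} [MetricSpace V] (X : Set V) : Prop :=
  ∀ x ∈ X, ∀ y ∈ X, ∃ g : V ≃ᵢ V, g '' X = X ∧ g x = y
namespace EngelAux

variable {d : ℕ} {A : ℤ → ℤ} {a b δ : ℝ}

lemma eVec_last (hd : 2 ≤ d) :
    eVec d d = EuclideanSpace.single (⟨d - 1, by omega⟩ : Fin d) (1 : ℝ) := by
  rw [eVec, dif_pos (by omega : d - 1 < d)]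

lemma engelU_eq (hA : EngelSeq d A) (i : ℤ) :
    engelU d A i = (if 0 < A i then (1 : ℝ) else -1) •
      EuclideanSpace.single
        (⟨(A i).natAbs - 1, by have := hA.1 i; omega⟩ : Fin d) (1 : ℝ) := by
  rw [engelU, eVec, dif_pos]

lemma smul_single (i : Fin d) (r : ℝ) :
    r • EuclideanSpace.single i (1 : ℝ) = EuclideanSpace.single i r := by
  ext t
  simp [EuclideanSpace.single_apply, PiLp.smul_apply, mul_ite]

lemma natAbs_periodic (hA : EngelSeq d A) (i j : ℤ) (h : ((d : ℤ) - 1) ∣ (i - j)) :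
    (A i).natAbs = (A j).natAbs := by
  have key : ∀ (n : ℕ) (i : ℤ), (A (i + ((d : ℤ) - 1) * n)).natAbs = (A i).natAbs := by
    intro n
    induction n with
    | zero => intro i; simp
    | succ n ih =>
      intro i
      have h2 := hA.2.1 (i + ((d : ℤ) - 1) * n)
      have harg : i + ((d : ℤ) - 1) * n + ((d : ℤ) - 1) = i + ((d : ℤ) - 1) * ((n : ℕ) + 1 : ℕ) := by
        push_cast; ring
      rw [harg] at h2
      rw [h2, ih]
  obtain ⟨t, ht⟩ := h
  rcases le_or_gt 0 t with h0 | h0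
  · have h1 : i = j + ((d : ℤ) - 1) * (t.toNat : ℤ) := by
      rw [Int.toNat_of_nonneg h0]; linarith
    rw [h1, key]
  · have h1 : j = i + ((d : ℤ) - 1) * (((-t).toNat : ℤ)) := by
      rw [Int.toNat_of_nonneg (by omega : (0:ℤ) ≤ -t)]; linarith
    rw [h1, key]

lemma window_exists (hA : EngelSeq d A) (hd : 2 ≤ d) (c ε : ℤ) (hε : ε = 1 ∨ ε = -1)
    (s : ℕ) (h1 : 1 ≤ s) (h2 : s ≤ d - 1) :
    ∃ j : ℕ, j < d - 1 ∧ (A (c + ε * j)).natAbs = s := by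
  obtain ⟨i, hi1, hi2, hi3⟩ := hA.2.2 s h1 h2
  have he0 : (0:ℤ) < (d : ℤ) - 1 := by omega
  set w : ℤ := ε * (i - c) with hw
  have hnn : ((w % ((d:ℤ)-1)).toNat : ℤ) = w % ((d:ℤ)-1) :=
    Int.toNat_of_nonneg (Int.emod_nonneg w (by omega))
  refine ⟨(w % ((d:ℤ)-1)).toNat, ?_, ?_⟩
  · have h3 := Int.emod_lt_of_pos w he0
    omega
  · rw [← hi3]
    apply natAbs_periodic hA
    rw [hnn]
    refine ⟨-ε * (w / ((d:ℤ)-1)), ?_⟩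
    have hmod : w % ((d:ℤ)-1) = w - ((d:ℤ)-1) * (w / ((d:ℤ)-1)) := Int.emod_def w ((d:ℤ)-1)
    rcases hε with h | h <;> subst h <;> rw [hmod, hw] <;> ring

end EngelAux
namespace EngelAux2
open EngelAux

variable {d : ℕ} {A : ℤ → ℤ} {a b δ : ℝ}

lemma exists_posEquiv (hd : 2 ≤ d) (hA : EngelSeq d A) (c ε : ℤ) (hε : ε = 1 ∨ ε = -1) :
    ∃ σ : Equiv.Perm (Fin d),
      (∀ j : Fin d, (j : ℕ) < d - 1 → ((σ j : ℕ) = (A (c + ε * (j : ℕ))).natAbs - 1)) ∧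
      (∀ j : Fin d, (j : ℕ) = d - 1 → σ j = j) := by
  set F : Fin d → Fin d := fun j =>
    if h : (j : ℕ) < d - 1 then
      (⟨(A (c + ε * (j : ℕ))).natAbs - 1, by have := hA.1 (c + ε * (j : ℕ)); omega⟩ : Fin d)
    else j with hF
  have hsurj : Function.Surjective F := by
    intro t
    by_cases ht : (t : ℕ) < d - 1
    · obtain ⟨jj, hjj, hval⟩ := window_exists hA hd c ε hε ((t : ℕ) + 1) (by omega) (by omega)
      refine ⟨⟨jj, by omega⟩, ?_⟩
      have : ((⟨jj, by omega⟩ : Fin d) : ℕ) < d - 1 := hjj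
      rw [hF]; simp only [this, dif_pos]
      apply Fin.ext
      simp only []
      omega
    · exact ⟨t, by rw [hF]; simp only [ht, dif_neg, not_false_iff]⟩
  have hbij : Function.Bijective F := ⟨Finite.injective_iff_surjective.mpr hsurj, hsurj⟩
  refine ⟨Equiv.ofBijective F hbij, ?_, ?_⟩
  · intro j hj
    show ((F j : Fin d) : ℕ) = _
    rw [hF]; simp only [hj, dif_pos]
  · intro j hj
    show F j = j
    rw [hF]; simp only [hj]
    simp

lemma exists_sperm (σ : Equiv.Perm (Fin d)) (s : Fin d → ℝ) (hs : ∀ i, s i = 1 ∨ s i = -1) :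
    ∃ M : Euc d ≃ₗᵢ[ℝ] Euc d,
      (∀ (x : Euc d) (i : Fin d), M x i = s i * x (σ i)) ∧
      (∀ (y : Euc d) (j : Fin d), M.symm y j = s (σ.symm j) * y (σ.symm j)) := by
  have hsq : ∀ i, s i * s i = 1 := by intro i; rcases hs i with h | h <;> rw [h] <;> norm_num
  let E : Euc d ≃ₗ[ℝ] Euc d :=
    { toFun := fun x => WithLp.toLp 2 (fun i => s i * x (σ i) : ∀ _ : Fin d, ℝ)
      invFun := fun y => WithLp.toLp 2 (fun j => s (σ.symm j) * y (σ.symm j) : ∀ _ : Fin d, ℝ)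
      map_add' := by intro x y; ext i; simp [PiLp.add_apply]; ring
      map_smul' := by intro r x; ext i; simp [PiLp.smul_apply, smul_eq_mul]; ring
      left_inv := by
        intro x; ext j
        simp only [PiLp.toLp_apply]
        rw [Equiv.apply_symm_apply, ← mul_assoc, hsq, one_mul]
      right_inv := by
        intro y; ext i
        simp only [PiLp.toLp_apply]
        rw [Equiv.symm_apply_apply, ← mul_assoc, hsq, one_mul] }
  have hnorm : ∀ x : Euc d, ‖E x‖ = ‖x‖ := by
    intro x
    rw [EuclideanSpace.norm_eq, EuclideanSpace.norm_eq]
    congr 1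
    rw [← Equiv.sum_comp σ (fun i => ‖x i‖ ^ 2)]
    refine Finset.sum_congr rfl fun i _ => ?_
    have hEx : E x i = s i * x (σ i) := rfl
    rw [hEx]
    rcases hs i with h | h <;> simp [h, norm_mul]
  exact ⟨{ toLinearEquiv := E, norm_map' := hnorm }, fun _ _ => rfl, fun _ _ => rfl⟩

end EngelAux2
namespace EngelAux3
open EngelAux EngelAux2

variable {d : ℕ} {A : ℤ → ℤ} {a b δ : ℝ}

lemma grid_add {z₁ z₂ : Euc d} (h₁ : z₁ ∈ engelGrid d a) (h₂ : z₂ ∈ engelGrid d a) :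
    z₁ + z₂ ∈ engelGrid d a := by
  intro j
  constructor
  · intro hj
    obtain ⟨m₁, hm₁⟩ := (h₁ j).1 hj
    obtain ⟨m₂, hm₂⟩ := (h₂ j).1 hj
    exact ⟨m₁ + m₂, by rw [PiLp.add_apply, hm₁, hm₂]; push_cast; ring⟩
  · intro hj
    rw [PiLp.add_apply, (h₁ j).2 hj, (h₂ j).2 hj, add_zero]

lemma grid_sub {z₁ z₂ : Euc d} (h₁ : z₁ ∈ engelGrid d a) (h₂ : z₂ ∈ engelGrid d a) :
    z₁ - z₂ ∈ engelGrid d a := by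
  intro j
  constructor
  · intro hj
    obtain ⟨m₁, hm₁⟩ := (h₁ j).1 hj
    obtain ⟨m₂, hm₂⟩ := (h₂ j).1 hj
    exact ⟨m₁ - m₂, by rw [PiLp.sub_apply, hm₁, hm₂]; push_cast; ring⟩
  · intro hj
    rw [PiLp.sub_apply, (h₁ j).2 hj, (h₂ j).2 hj, sub_zero]

lemma mem_grid_of_apply (hd : 2 ≤ d) (f : Euc d → Euc d) (σ : Equiv.Perm (Fin d))
    (s : Fin d → ℝ) (hs : ∀ i, s i = 1 ∨ s i = -1)
    (happ : ∀ (x : Euc d) (i : Fin d), f x i = s i * x (σ i))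
    (hlast : ∀ i : Fin d, (i : ℕ) = d - 1 → ((σ i : ℕ) = d - 1))
    {z : Euc d} (hz : z ∈ engelGrid d a) : f z ∈ engelGrid d a := by
  intro j
  constructor
  · intro hj
    have hσ : (σ j : ℕ) < d - 1 := by
      rcases lt_or_eq_of_le (by omega : (σ j : ℕ) ≤ d - 1) with h | h
      · exact h
      · exfalso
        have h1 : (σ (⟨d - 1, by omega⟩ : Fin d) : ℕ) = d - 1 := hlast _ rfl
        have h2 : σ j = σ (⟨d - 1, by omega⟩ : Fin d) := Fin.ext (by omega)
        have := σ.injective h2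
        have : (j : ℕ) = d - 1 := by rw [this]
        omega
    obtain ⟨mm, hm⟩ := (hz (σ j)).1 hσ
    rcases hs j with h | h
    · exact ⟨mm, by rw [happ, h, hm]; ring⟩
    · exact ⟨-mm, by rw [happ, h, hm]; push_cast; ring⟩
  · intro hj
    rw [happ, (hz (σ j)).2 (hlast j hj), mul_zero]

lemma engelU_apply_last (hA : EngelSeq d A) (hd : 2 ≤ d) (i : ℤ) :
    engelU d A i (⟨d - 1, by omega⟩ : Fin d) = 0 := by
  have hne : (⟨d - 1, by omega⟩ : Fin d) ≠
      (⟨(A i).natAbs - 1, by have := hA.1 i; omega⟩ : Fin d) := by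
    intro hcon
    have := hA.1 i
    have h2 : d - 1 = (A i).natAbs - 1 := congrArg Fin.val hcon
    omega
  rw [engelU_eq hA, PiLp.smul_apply, EuclideanSpace.single_apply, if_neg hne, smul_zero]

lemma engelCum_apply_last (hA : EngelSeq d A) (hd : 2 ≤ d) (i : ℤ) :
    engelCum d A i (⟨d - 1, by omega⟩ : Fin d) = 0 := by
  rw [engelCum]
  split
  · rw [WithLp.ofLp_sum, Finset.sum_apply]
    exact Finset.sum_eq_zero fun j _ => engelU_apply_last hA hd _
  · rw [PiLp.neg_apply, WithLp.ofLp_sum, Finset.sum_apply]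
    rw [Finset.sum_eq_zero fun j _ => engelU_apply_last hA hd _, neg_zero]

lemma mem_layer_last (hA : EngelSeq d A) (hd : 2 ≤ d) (m : ℤ) (x : Euc d)
    (hx : x ∈ engelLayer d A a b δ m) : x (⟨d - 1, by omega⟩ : Fin d) = 2 * b * m := by
  obtain ⟨z, hz, hzx⟩ := Set.mem_vadd_set.mp hx
  rw [← hzx, vadd_eq_add, PiLp.add_apply, (hz _).2 rfl, add_zero, engelOffset,
    PiLp.add_apply, PiLp.smul_apply, PiLp.smul_apply, engelCum_apply_last hA hd,
    eVec_last hd, EuclideanSpace.single_apply, if_pos rfl]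
  simp

lemma coord_abs_le (x y : Euc d) (j : Fin d) : |x j - y j| ≤ dist x y := by
  rw [EuclideanSpace.dist_eq]
  have h1 : dist (x j) (y j) ^ 2 ≤ ∑ i, dist (x i) (y i) ^ 2 :=
    Finset.single_le_sum (f := fun i => dist (x i) (y i) ^ 2)
      (fun i _ => sq_nonneg _) (Finset.mem_univ j)
  calc |x j - y j| = dist (x j) (y j) := (Real.dist_eq _ _).symm
    _ = Real.sqrt (dist (x j) (y j) ^ 2) := (Real.sqrt_sq dist_nonneg).symm
    _ ≤ _ := Real.sqrt_le_sqrt h1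

end EngelAux3
namespace EngelAux4
open EngelAux EngelAux2 EngelAux3

variable {d : ℕ} {A : ℤ → ℤ}

lemma engelCum_succ (i : ℤ) :
    engelCum d A i = engelCum d A (i - 1) + engelU d A i := by
  by_cases h1 : 1 ≤ i
  · rw [engelCum, engelCum, if_pos (by omega : (0:ℤ) ≤ i), if_pos (by omega : (0:ℤ) ≤ i - 1)]
    have h2 : i.toNat = (i - 1).toNat + 1 := by omega
    rw [h2, Finset.sum_range_succ,
      show (((i - 1).toNat : ℤ) + 1) = i from by omega]
  · by_cases h0 : i = 0
    · subst h0
      rw [engelCum, engelCum, if_pos le_rfl, if_neg (by omega : ¬ (0:ℤ) ≤ (0:ℤ) - 1)]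
      have : ((0:ℤ)).toNat = 0 := rfl
      have h3 : (-((0:ℤ) - 1)).toNat = 1 := rfl
      rw [this, h3, Finset.sum_range_one, Finset.sum_range_zero]
      simp
    · have hi : i < 0 := by omega
      rw [engelCum, engelCum, if_neg (by omega), if_neg (by omega)]
      have h2 : (-(i - 1)).toNat = (-i).toNat + 1 := by omega
      rw [h2, Finset.sum_range_succ]
      have harg : -(((-i).toNat : ℤ)) = i := by omega
      rw [harg]
      abel

lemma cum_map (L : Euc d ≃ₗᵢ[ℝ] Euc d) (p p' lo η : ℤ) (hη : η = 1 ∨ η = -1)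
    (hlo : lo ≤ 0) (hlo2 : 0 ≤ lo + (d : ℤ) - 1)
    (hu : ∀ r : ℤ, lo + 1 ≤ r → r ≤ lo + (d : ℤ) - 1 →
      L (engelU d A (p + r)) = (η : ℝ) • engelU d A (p' + η * r + (1 - η) / 2))
    (q : ℤ) (h1 : lo ≤ q) (h2 : q ≤ lo + (d : ℤ) - 1) :
    L (engelCum d A (p + q) - engelCum d A p) =
      engelCum d A (p' + η * q) - engelCum d A p' := by
  have pos : ∀ n : ℕ, (n : ℤ) ≤ lo + (d : ℤ) - 1 →
      L (engelCum d A (p + (n : ℤ)) - engelCum d A p) =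
        engelCum d A (p' + η * (n : ℤ)) - engelCum d A p' := by
    intro n
    induction n with
    | zero => intro _; simp
    | succ n ih =>
      intro hb'
      have hcast : ((n + 1 : ℕ) : ℤ) = (n : ℤ) + 1 := by push_cast; ring
      rw [hcast] at *
      have hb2 : (n : ℤ) ≤ lo + (d : ℤ) - 1 := by omega
      have e1 : engelCum d A (p + ((n : ℤ) + 1)) - engelCum d A p =
          (engelCum d A (p + (n : ℤ)) - engelCum d A p) + engelU d A (p + ((n : ℤ) + 1)) := by
        rw [engelCum_succ (p + ((n : ℤ) + 1)),
          show p + ((n : ℤ) + 1) - 1 = p + (n : ℤ) by ring]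
        abel
      rw [e1, map_add, ih hb2, hu ((n : ℤ) + 1) (by omega) (by omega)]
      rcases hη with h' | h' <;> subst h'
      · rw [show p' + 1 * ((n : ℤ) + 1) + (1 - 1) / 2 = p' + 1 * (n : ℤ) + 1 by omega,
          show p' + 1 * ((n : ℤ) + 1) = p' + 1 * (n : ℤ) + 1 by ring,
          engelCum_succ (p' + 1 * (n : ℤ) + 1),
          show p' + 1 * (n : ℤ) + 1 - 1 = p' + 1 * (n : ℤ) by ring]
        push_cast
        rw [one_smul]
        abel
      · rw [show p' + (-1) * ((n : ℤ) + 1) + (1 - (-1)) / 2 = p' + (-1) * (n : ℤ) by omega,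
          show p' + (-1) * ((n : ℤ) + 1) = p' + (-1) * (n : ℤ) - 1 by ring,
          engelCum_succ (p' + (-1) * (n : ℤ)),
          show p' + (-1) * (n : ℤ) - 1 = p' + (-1) * (n : ℤ) - 1 by ring]
        push_cast
        rw [neg_smul, one_smul]
        abel
  have neg : ∀ n : ℕ, lo ≤ -(n : ℤ) →
      L (engelCum d A (p + (-(n : ℤ))) - engelCum d A p) =
        engelCum d A (p' + η * (-(n : ℤ))) - engelCum d A p' := by
    intro n
    induction n with
    | zero => intro _; simp
    | succ n ih =>
      intro hb'
      have hcast : ((n + 1 : ℕ) : ℤ) = (n : ℤ) + 1 := by push_cast; ring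
      rw [hcast] at *
      have hb2 : lo ≤ -(n : ℤ) := by omega
      have e1 : engelCum d A (p + (-((n : ℤ) + 1))) - engelCum d A p =
          (engelCum d A (p + (-(n : ℤ))) - engelCum d A p) - engelU d A (p + (-(n : ℤ))) := by
        rw [engelCum_succ (p + (-(n : ℤ)))]
        rw [show p + (-(n : ℤ)) - 1 = p + (-((n : ℤ) + 1)) by ring]
        abel
      rw [e1, map_sub, ih hb2, hu (-(n : ℤ)) (by omega) (by omega)]
      rcases hη with h' | h' <;> subst h'
      · rw [show p' + 1 * (-(n : ℤ)) + (1 - 1) / 2 = p' + 1 * (-(n : ℤ)) by omega,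
          engelCum_succ (p' + 1 * (-(n : ℤ))),
          show p' + 1 * (-(n : ℤ)) - 1 = p' + 1 * (-((n : ℤ) + 1)) by ring]
        push_cast
        rw [one_smul]
        abel
      · rw [show p' + (-1) * (-(n : ℤ)) + (1 - (-1)) / 2 = p' + (-1) * (-((n : ℤ) + 1)) by omega,
          engelCum_succ (p' + (-1) * (-((n : ℤ) + 1))),
          show p' + (-1) * (-((n : ℤ) + 1)) - 1 = p' + (-1) * (-(n : ℤ)) by ring]
        push_cast
        rw [neg_smul, one_smul]
        abel
  rcases le_or_gt 0 q with hq | hq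
  · have h3 : ((q.toNat : ℕ) : ℤ) = q := Int.toNat_of_nonneg hq
    have := pos q.toNat (by omega)
    rwa [h3] at this
  · have h3 : (((-q).toNat : ℕ) : ℤ) = -q := Int.toNat_of_nonneg (by omega)
    have := neg (-q).toNat (by omega)
    rw [h3] at this
    rwa [show -(-q) = q by ring] at this

end EngelAux4
namespace EngelAux5
open EngelAux EngelAux2 EngelAux3 EngelAux4

variable {d : ℕ} {A : ℤ → ℤ}

lemma exists_M (hd : 2 ≤ d) (hA : EngelSeq d A) (a : ℝ) (c ε : ℤ) (hε : ε = 1 ∨ ε = -1)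
    (τ : ℝ) (hτ : τ = 1 ∨ τ = -1) :
    ∃ M : Euc d ≃ₗᵢ[ℝ] Euc d,
      (∀ j : Fin d, (j : ℕ) < d - 1 →
        M (EuclideanSpace.single j (1 : ℝ)) = τ • engelU d A (c + ε * (j : ℕ))) ∧
      (∀ j : Fin d, (j : ℕ) = d - 1 →
        M (EuclideanSpace.single j (1 : ℝ)) = τ • EuclideanSpace.single j (1 : ℝ)) ∧
      (∀ z ∈ engelGrid d a, M z ∈ engelGrid d a) ∧
      (∀ z ∈ engelGrid d a, M.symm z ∈ engelGrid d a) := by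
  obtain ⟨σ, hσ1, hσ2⟩ := exists_posEquiv hd hA c ε hε
  set s : Fin d → ℝ := fun i =>
    if (i : ℕ) = d - 1 then τ
    else τ * (if 0 < A (c + ε * ((σ.symm i : Fin d) : ℕ)) then (1 : ℝ) else -1) with hs_def
  have hs : ∀ i, s i = 1 ∨ s i = -1 := by
    intro i
    simp only [hs_def]
    by_cases h1 : (i : ℕ) = d - 1
    · rw [if_pos h1]; exact hτ
    · rw [if_neg h1]
      rcases hτ with h | h <;> subst h <;> split <;> norm_num
  obtain ⟨M, happ, hsymm⟩ := exists_sperm σ.symm s hs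
  have hMsingle : ∀ (j : Fin d) (v : ℝ),
      M (EuclideanSpace.single j v) = EuclideanSpace.single (σ j) (s (σ j) * v) := by
    intro j v
    ext i
    rw [happ, EuclideanSpace.single_apply, EuclideanSpace.single_apply]
    by_cases hij : i = σ j
    · subst hij
      rw [if_pos rfl, if_pos (by rw [Equiv.symm_apply_apply])]
    · rw [if_neg hij, if_neg, mul_zero]
      intro hcon
      exact hij (by rw [← hcon, Equiv.apply_symm_apply])
  refine ⟨M, ?_, ?_, ?_, ?_⟩
  · intro j hj
    rw [hMsingle, mul_one]
    have hcoord : (σ j : ℕ) = (A (c + ε * (j : ℕ))).natAbs - 1 := hσ1 j hj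
    have hAj := hA.1 (c + ε * (j : ℕ))
    have hne : ¬ ((σ j : ℕ) = d - 1) := by omega
    have hsσ : s (σ j) = τ * (if 0 < A (c + ε * (j : ℕ)) then (1 : ℝ) else -1) := by
      rw [hs_def]
      simp only [hne, if_false, Equiv.symm_apply_apply]
    rw [hsσ, engelU_eq hA, smul_smul, smul_single]
    have hfin : σ j = (⟨(A (c + ε * (j : ℕ))).natAbs - 1,
        by have := hA.1 (c + ε * (j : ℕ)); omega⟩ : Fin d) := Fin.ext hcoord
    rw [hfin]
  · intro j hj
    rw [hMsingle, hσ2 j hj, mul_one, smul_single]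
    have hsj : s j = τ := by rw [hs_def]; simp only [hj, if_true]
    rw [hsj]
  · intro z hz
    exact mem_grid_of_apply hd M σ.symm s hs happ
      (fun i hi => by
        rw [show σ.symm i = i from (Equiv.symm_apply_eq σ).mpr (hσ2 i hi).symm]
        exact hi) hz
  · intro z hz
    refine mem_grid_of_apply hd M.symm σ.symm.symm (fun j => s (σ.symm.symm j))
      (fun j => hs _) (fun y j => hsymm y j) ?_ hz
    intro i hi
    simp only [Equiv.symm_symm]
    rw [hσ2 i hi]; exact hi

end EngelAux5
namespace EngelAux6
open EngelAux EngelAux2 EngelAux3 EngelAux4 EngelAux5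

variable {d : ℕ} {A : ℤ → ℤ} {a b δ : ℝ}

lemma forward (hd : 2 ≤ d) (hA : EngelSeq d A) (hb : 0 < b) (ρ : ℝ)
    (hρ : ρ < 2 * (d : ℝ) * b) (m m' η : ℤ) (x x' : Euc d)
    (hx : x ∈ engelLayer d A a b δ m) (hx' : x' ∈ engelLayer d A a b δ m')
    (L : Euc d ≃ₗᵢ[ℝ] Euc d)
    (hLgrid : ∀ z ∈ engelGrid d a, L z ∈ engelGrid d a)
    (hLe : L (eVec d d) = ((η : ℤ) : ℝ) • eVec d d)
    (hLc : ∀ k : ℤ, |k| ≤ (d : ℤ) - 1 →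
      L (engelCum d A ((m + k) / 2) - engelCum d A (m / 2)) =
        engelCum d A ((m' + η * k) / 2) - engelCum d A (m' / 2))
    (y : Euc d) (hy : y ∈ engelSet d A a b δ) (hdist : dist x y ≤ ρ) :
    x' + L (y - x) ∈ engelSet d A a b δ := by
  obtain ⟨n, hn⟩ := Set.mem_iUnion.mp hy
  have hyl := mem_layer_last hA hd n y hn
  have hxl := mem_layer_last hA hd m x hx
  have hco := coord_abs_le x y (⟨d - 1, by omega⟩ : Fin d)
  rw [hxl, hyl] at hco
  have hkb : |n - m| ≤ (d : ℤ) - 1 := by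
    have hd0 : (0 : ℝ) < (d : ℝ) := by
      have : (2 : ℝ) ≤ (d : ℝ) := by exact_mod_cast hd
      linarith
    have h2 : 2 * b * |(m : ℝ) - (n : ℝ)| < 2 * (d : ℝ) * b := by
      calc 2 * b * |(m : ℝ) - (n : ℝ)| = |2 * b * ((m : ℝ) - (n : ℝ))| := by
            rw [abs_mul, abs_of_pos (by linarith : (0:ℝ) < 2 * b)]
        _ = |2 * b * (m : ℝ) - 2 * b * (n : ℝ)| := by ring_nf
        _ ≤ ρ := hco.trans hdist
        _ < _ := hρ
    have h3 : |(m : ℝ) - (n : ℝ)| < (d : ℝ) := by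
      nlinarith [abs_nonneg ((m : ℝ) - (n : ℝ))]
    have h4 : |((n - m : ℤ) : ℝ)| < (d : ℝ) := by
      rw [show ((n - m : ℤ) : ℝ) = -((m : ℝ) - (n : ℝ)) by push_cast; ring, abs_neg]
      exact h3
    rw [← Int.cast_abs] at h4
    have h5 : |n - m| < (d : ℤ) := by exact_mod_cast h4
    omega
  obtain ⟨z, hz, hzy⟩ := Set.mem_vadd_set.mp hn
  obtain ⟨y₀, hy₀, hxy⟩ := Set.mem_vadd_set.mp hx
  obtain ⟨y₀', hy₀', hxy'⟩ := Set.mem_vadd_set.mp hx'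
  rw [vadd_eq_add] at hzy hxy hxy'
  apply Set.mem_iUnion.mpr ⟨m' + η * (n - m), ?_⟩
  have hcum := hLc (n - m) hkb
  rw [show m + (n - m) = n by ring] at hcum
  have hsplit : y - x = (2 * b * (n : ℝ) - 2 * b * (m : ℝ)) • eVec d d +
      δ • (engelCum d A (n / 2) - engelCum d A (m / 2)) + (z - y₀) := by
    rw [← hzy, ← hxy, engelOffset, engelOffset]
    module
  have hLyx : L (y - x) = (2 * b * (n : ℝ) - 2 * b * (m : ℝ)) • (((η : ℤ) : ℝ) • eVec d d) +
      δ • (engelCum d A ((m' + η * (n - m)) / 2) - engelCum d A (m' / 2)) + L (z - y₀) := by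
    rw [hsplit, map_add, map_add, map_smul, map_smul, hLe, hcum]
  have hgoal : x' + L (y - x) =
      engelOffset d A b δ (m' + η * (n - m)) +ᵥ (y₀' + L (z - y₀)) := by
    rw [vadd_eq_add, ← hxy', hLyx, engelOffset, engelOffset]
    push_cast
    module
  rw [hgoal]
  exact Set.vadd_mem_vadd_set (grid_add hy₀' (hLgrid _ (grid_sub hz hy₀)))

end EngelAux6
open EngelAux EngelAux2 EngelAux3 EngelAux4 EngelAux5 EngelAux6 in
/-- Theorem 5.2: if `0 < a < b` and `2dR - ε < 2db` (in particular
whenever `a² ≤ εb/(d(d-1))`), where `R = √(b² + (d-1)a²)`, then all `(2dR - ε)`-clusters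
of the Engel set `X(A,a,b,δ)` are mutually equivalent: `N_X(2dR - ε) = 1`. -/
theorem engelSet_clusters_equiv (d : ℕ) (hd : 2 ≤ d) (A : ℤ → ℤ) (hA : EngelSeq d A)
    (a b δ ε : ℝ) (ha : 0 < a) (hab : a < b) (hδ : 0 < δ) (hε : 0 < ε)
    (R : ℝ) (hR : R = Real.sqrt (b ^ 2 + ((d : ℝ) - 1) * a ^ 2))
    (h : 2 * (d : ℝ) * R - ε < 2 * (d : ℝ) * b ∨
      a ^ 2 ≤ ε * b / ((d : ℝ) * ((d : ℝ) - 1))) :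
    ∀ x ∈ engelSet d A a b δ, ∀ x' ∈ engelSet d A a b δ,
      ClustersEquiv (engelSet d A a b δ) x x' (2 * (d : ℝ) * R - ε) := by
  have hb : 0 < b := lt_trans ha hab
  have hd2 : (2 : ℝ) ≤ (d : ℝ) := by exact_mod_cast hd
  set ρ : ℝ := 2 * (d : ℝ) * R - ε with hρdef
  have hρ : ρ < 2 * (d : ℝ) * b := by
    rcases h with h | h
    · exact h
    · have hR0 : 0 ≤ R := by rw [hR]; exact Real.sqrt_nonneg _
      have hR2 : R ^ 2 = b ^ 2 + ((d : ℝ) - 1) * a ^ 2 := by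
        rw [hR, Real.sq_sqrt]
        nlinarith [sq_nonneg a, sq_nonneg b]
      have hdd : (0 : ℝ) < (d : ℝ) * ((d : ℝ) - 1) := by nlinarith
      have key : a ^ 2 * ((d : ℝ) * ((d : ℝ) - 1)) ≤ ε * b := (le_div_iff₀ hdd).mp h
      have hRb : b < R := by nlinarith
      rw [hρdef]
      nlinarith [mul_pos (sub_pos.mpr hRb) hb]
  intro x hx x' hx'
  obtain ⟨m, hm⟩ := Set.mem_iUnion.mp hx
  obtain ⟨m', hm'⟩ := Set.mem_iUnion.mp hx'
  obtain ⟨η, hη, L, hLgrid, hLgrid', hLe, hLc⟩ :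
      ∃ η : ℤ, (η = 1 ∨ η = -1) ∧ ∃ L : Euc d ≃ₗᵢ[ℝ] Euc d,
        (∀ z ∈ engelGrid d a, L z ∈ engelGrid d a) ∧
        (∀ z ∈ engelGrid d a, L.symm z ∈ engelGrid d a) ∧
        L (eVec d d) = ((η : ℤ) : ℝ) • eVec d d ∧
        (∀ k : ℤ, |k| ≤ (d : ℤ) - 1 →
          L (engelCum d A ((m + k) / 2) - engelCum d A (m / 2)) =
            engelCum d A ((m' + η * k) / 2) - engelCum d A (m' / 2)) := by
    set lo : ℤ := (m - (d : ℤ) + 1) / 2 - m / 2 with hlo_def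
    by_cases hpar : m % 2 = m' % 2
    · obtain ⟨M₁, hM₁u, hM₁l, hM₁g, hM₁g'⟩ :=
        exists_M hd hA a (m / 2 + lo + 1) 1 (Or.inl rfl) 1 (Or.inl rfl)
      obtain ⟨M₂, hM₂u, hM₂l, hM₂g, hM₂g'⟩ :=
        exists_M hd hA a (m' / 2 + lo + 1) 1 (Or.inl rfl) 1 (Or.inl rfl)
      refine ⟨1, Or.inl rfl, M₁.symm.trans M₂, ?_, ?_, ?_, ?_⟩
      · intro z hz
        rw [LinearIsometryEquiv.trans_apply]
        exact hM₂g _ (hM₁g' _ hz)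
      · intro z hz
        have : (M₁.symm.trans M₂).symm z = M₁ (M₂.symm z) := rfl
        rw [this]
        exact hM₁g _ (hM₂g' _ hz)
      · rw [LinearIsometryEquiv.trans_apply, eVec_last hd]
        have h1 := hM₁l ⟨d - 1, by omega⟩ rfl
        rw [one_smul] at h1
        have hs1 : M₁.symm (EuclideanSpace.single (⟨d - 1, by omega⟩ : Fin d) (1 : ℝ)) =
            EuclideanSpace.single (⟨d - 1, by omega⟩ : Fin d) (1 : ℝ) := by
          have h2 := congrArg M₁.symm h1
          rw [M₁.symm_apply_apply] at h2
          exact h2.symm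
        rw [hs1, hM₂l ⟨d - 1, by omega⟩ rfl]
        norm_num
      · intro k hk
        obtain ⟨hka, hkb2⟩ := abs_le.mp hk
        have hu : ∀ r : ℤ, lo + 1 ≤ r → r ≤ lo + (d : ℤ) - 1 →
            (M₁.symm.trans M₂) (engelU d A (m / 2 + r)) =
              ((1 : ℤ) : ℝ) • engelU d A (m' / 2 + 1 * r + (1 - 1) / 2) := by
          intro r h1 h2
          have hj : ((r - lo - 1).toNat : ℤ) = r - lo - 1 := by omega
          have hjlt : (r - lo - 1).toNat < d - 1 := by omega
          set jF : Fin d := ⟨(r - lo - 1).toNat, by omega⟩ with hjF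
          have hA1 := hM₁u jF hjlt
          rw [one_smul] at hA1
          have harg : (m / 2 + lo + 1) + 1 * ((jF : ℕ) : ℤ) = m / 2 + r := by
            have : ((jF : ℕ) : ℤ) = r - lo - 1 := by rw [hjF]; exact hj
            omega
          rw [harg] at hA1
          have hs1 : M₁.symm (engelU d A (m / 2 + r)) = EuclideanSpace.single jF 1 := by
            have h4 := congrArg M₁.symm hA1
            rw [M₁.symm_apply_apply] at h4
            exact h4.symm
          rw [LinearIsometryEquiv.trans_apply, hs1, hM₂u jF hjlt]
          rw [show (m' / 2 + lo + 1) + 1 * ((jF : ℕ) : ℤ) = m' / 2 + 1 * r + (1 - 1) / 2 by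
            have : ((jF : ℕ) : ℤ) = r - lo - 1 := by rw [hjF]; exact hj
            omega]
          norm_num
        rw [show (m + k) / 2 = m / 2 + ((m + k) / 2 - m / 2) from by omega,
          show (m' + 1 * k) / 2 = m' / 2 + 1 * ((m + k) / 2 - m / 2) from by omega]
        exact cum_map (M₁.symm.trans M₂) (m / 2) (m' / 2) lo 1 (Or.inl rfl)
          (by omega) (by omega) hu _ (by omega) (by omega)
    · obtain ⟨M₁, hM₁u, hM₁l, hM₁g, hM₁g'⟩ :=
        exists_M hd hA a (m / 2 + lo + 1) 1 (Or.inl rfl) 1 (Or.inl rfl)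
      obtain ⟨M₂, hM₂u, hM₂l, hM₂g, hM₂g'⟩ :=
        exists_M hd hA a (m' / 2 - lo) (-1) (Or.inr rfl) (-1) (Or.inr rfl)
      refine ⟨-1, Or.inr rfl, M₁.symm.trans M₂, ?_, ?_, ?_, ?_⟩
      · intro z hz
        rw [LinearIsometryEquiv.trans_apply]
        exact hM₂g _ (hM₁g' _ hz)
      · intro z hz
        have : (M₁.symm.trans M₂).symm z = M₁ (M₂.symm z) := rfl
        rw [this]
        exact hM₁g _ (hM₂g' _ hz)
      · rw [LinearIsometryEquiv.trans_apply, eVec_last hd]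
        have h1 := hM₁l ⟨d - 1, by omega⟩ rfl
        rw [one_smul] at h1
        have hs1 : M₁.symm (EuclideanSpace.single (⟨d - 1, by omega⟩ : Fin d) (1 : ℝ)) =
            EuclideanSpace.single (⟨d - 1, by omega⟩ : Fin d) (1 : ℝ) := by
          have h2 := congrArg M₁.symm h1
          rw [M₁.symm_apply_apply] at h2
          exact h2.symm
        rw [hs1, hM₂l ⟨d - 1, by omega⟩ rfl]
        norm_num
      · intro k hk
        obtain ⟨hka, hkb2⟩ := abs_le.mp hk
        have hu : ∀ r : ℤ, lo + 1 ≤ r → r ≤ lo + (d : ℤ) - 1 →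
            (M₁.symm.trans M₂) (engelU d A (m / 2 + r)) =
              ((-1 : ℤ) : ℝ) • engelU d A (m' / 2 + (-1) * r + (1 - (-1)) / 2) := by
          intro r h1 h2
          have hj : ((r - lo - 1).toNat : ℤ) = r - lo - 1 := by omega
          have hjlt : (r - lo - 1).toNat < d - 1 := by omega
          set jF : Fin d := ⟨(r - lo - 1).toNat, by omega⟩ with hjF
          have hA1 := hM₁u jF hjlt
          rw [one_smul] at hA1
          have harg : (m / 2 + lo + 1) + 1 * ((jF : ℕ) : ℤ) = m / 2 + r := by
            have : ((jF : ℕ) : ℤ) = r - lo - 1 := by rw [hjF]; exact hj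
            omega
          rw [harg] at hA1
          have hs1 : M₁.symm (engelU d A (m / 2 + r)) = EuclideanSpace.single jF 1 := by
            have h4 := congrArg M₁.symm hA1
            rw [M₁.symm_apply_apply] at h4
            exact h4.symm
          rw [LinearIsometryEquiv.trans_apply, hs1, hM₂u jF hjlt]
          rw [show (m' / 2 - lo) + (-1) * ((jF : ℕ) : ℤ) = m' / 2 + (-1) * r + (1 - (-1)) / 2 by
            have : ((jF : ℕ) : ℤ) = r - lo - 1 := by rw [hjF]; exact hj
            omega]
          norm_num
        rw [show (m + k) / 2 = m / 2 + ((m + k) / 2 - m / 2) from by omega,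
          show (m' + (-1) * k) / 2 = m' / 2 + (-1) * ((m + k) / 2 - m / 2) from by omega]
        exact cum_map (M₁.symm.trans M₂) (m / 2) (m' / 2) lo (-1) (Or.inr rfl)
          (by omega) (by omega) hu _ (by omega) (by omega)
  have hc2 : ((η : ℤ) : ℝ) * ((η : ℤ) : ℝ) = 1 := by
    rcases hη with h | h <;> subst h <;> norm_num
  have hLe' : L.symm (eVec d d) = ((η : ℤ) : ℝ) • eVec d d := by
    have h2 := congrArg L.symm hLe
    rw [L.symm_apply_apply, map_smul] at h2
    have h3 := congrArg (fun v : Euc d => ((η : ℤ) : ℝ) • v) h2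
    rw [smul_smul, hc2, one_smul] at h3
    exact h3.symm
  have hLc' : ∀ k : ℤ, |k| ≤ (d : ℤ) - 1 →
      L.symm (engelCum d A ((m' + k) / 2) - engelCum d A (m' / 2)) =
        engelCum d A ((m + η * k) / 2) - engelCum d A (m / 2) := by
    intro k hk
    have hk2 : |η * k| ≤ (d : ℤ) - 1 := by
      rcases hη with h | h <;> subst h <;> simpa using hk
    have h2 := hLc (η * k) hk2
    rw [show m' + η * (η * k) = m' + k from by
      rcases hη with h | h <;> subst h <;> ring] at h2
    have h3 := congrArg L.symm h2
    rw [L.symm_apply_apply] at h3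
    exact h3.symm
  have hgx : x' + L (x - x) = x' := by rw [sub_self, map_zero, add_zero]
  let gE : Euc d ≃ Euc d :=
    { toFun := fun y => x' + L (y - x)
      invFun := fun w => x + L.symm (w - x')
      left_inv := fun y => by
        show x + L.symm (x' + L (y - x) - x') = y
        rw [add_sub_cancel_left, LinearIsometryEquiv.symm_apply_apply]
        abel
      right_inv := fun w => by
        show x' + L (x + L.symm (w - x') - x) = w
        rw [add_sub_cancel_left, LinearIsometryEquiv.apply_symm_apply]
        abel }
  have giso : Isometry (⇑gE) := Isometry.of_dist_eq fun y₁ y₂ => by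
    show dist (x' + L (y₁ - x)) (x' + L (y₂ - x)) = dist y₁ y₂
    rw [dist_eq_norm, dist_eq_norm,
      show x' + L (y₁ - x) - (x' + L (y₂ - x)) = L (y₁ - x) - L (y₂ - x) from by abel,
      ← map_sub, show y₁ - x - (y₂ - x) = y₁ - y₂ from by abel, L.norm_map]
  refine ⟨⟨gE, giso⟩, ?_, ?_⟩
  · exact hgx
  · ext w
    simp only [cluster, Set.mem_image, Set.mem_inter_iff, Metric.mem_closedBall]
    constructor
    · rintro ⟨yy, ⟨hyX, hyB⟩, rfl⟩
      constructor
      · exact forward hd hA hb ρ hρ m m' η x x' hm hm' L hLgrid hLe hLc yy hyX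
          (by rw [dist_comm]; exact hyB)
      · show dist (x' + L (yy - x)) x' ≤ ρ
        have heq : dist (x' + L (yy - x)) x' = dist yy x := by
          rw [dist_eq_norm, dist_eq_norm,
            show x' + L (yy - x) - x' = L (yy - x) from by abel, L.norm_map]
        rw [heq]
        exact hyB
    · rintro ⟨hwX, hwB⟩
      refine ⟨x + L.symm (w - x'), ⟨?_, ?_⟩, ?_⟩
      · exact forward hd hA hb ρ hρ m' m η x' x hm' hm L.symm hLgrid' hLe' hLc' w hwX
          (by rw [dist_comm]; exact hwB)
      · show dist (x + L.symm (w - x')) x ≤ ρ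
        have heq : dist (x + L.symm (w - x')) x = dist w x' := by
          rw [dist_eq_norm, dist_eq_norm,
            show x + L.symm (w - x') - x = L.symm (w - x') from by abel, L.symm.norm_map]
        rw [heq]
        exact hwB
      · show x' + L (x + L.symm (w - x') - x) = w
        rw [add_sub_cancel_left, LinearIsometryEquiv.apply_symm_apply]
        abel
end
end

section
/- Let X = X(A,a,b,δ) be an Engel set with 0 < δ < a < b. Fix p ∈ ℤ and x ∈ X_p, and define the chain (x_j)_{j∈ℤ} by x₀ = x, x_{j+1} = x_j + 2b·e_d if p + j is even, and x_{j+1} = x_j + 2b·e_d + δ·uᵢ if p + j = 2i − 1 is odd (where uᵢ = sign(aᵢ)e_{|aᵢ|}). Then for each j, x_j is the unique point of layer X_{p+j} closest to x_{j+1} and also the unique point of X_{p+j} closest to x_{j-1}; moreover |x_j − x_{j-1}| = 2b and |x_{j+1} − x_j| = √(δ² + 4b²) if p + j is odd, and |x_j − x_{j-1}| = √(δ² + 4b²) and |x_{j+1} − x_j| = 2b if p + j is even. -/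
noncomputable section
open scoped Pointwise

lemma engelCum_step (d : ℕ) (A : ℤ → ℤ) (i : ℤ) :
    engelCum d A i = engelCum d A (i - 1) + engelU d A i := by
  rcases lt_trichotomy i 0 with h | rfl | h
  · have h1 : ¬ (0 ≤ i) := by omega
    have h2 : ¬ (0 ≤ i - 1) := by omega
    have h3 : (-(i - 1)).toNat = (-i).toNat + 1 := by omega
    have h4 : (((-i).toNat : ℤ)) = -i := by omega
    rw [engelCum, engelCum, if_neg h1, if_neg h2, h3, Finset.sum_range_succ, h4, neg_neg]
    abel
  · rw [engelCum, engelCum]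
    norm_num [Finset.sum_range_one]
  · have h1 : (0:ℤ) ≤ i := le_of_lt h
    have h2 : (0:ℤ) ≤ i - 1 := by omega
    have h3 : i.toNat = (i - 1).toNat + 1 := by omega
    have h4 : (((i - 1).toNat : ℤ)) = i - 1 := by omega
    have h5 : i - 1 + 1 = i := by ring
    rw [engelCum, engelCum, if_pos h1, if_pos h2, h3, Finset.sum_range_succ, h4, h5]

def stepVec (d : ℕ) (A : ℤ → ℤ) (b δ : ℝ) (m : ℤ) : Euc d :=
  (2 * b) • eVec d d + (if m % 2 = 0 then 0 else δ • engelU d A ((m + 1) / 2))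

lemma engelOffset_step (d : ℕ) (A : ℤ → ℤ) (b δ : ℝ) (m : ℤ) :
    engelOffset d A b δ (m + 1) = engelOffset d A b δ m + stepVec d A b δ m := by
  rcases Int.even_or_odd m with ⟨k, hk⟩ | ⟨k, hk⟩
  · have h1 : (m + 1) / 2 = m / 2 := by omega
    have h2 : m % 2 = 0 := by omega
    rw [engelOffset, engelOffset, stepVec, if_pos h2, h1]
    push_cast
    module
  · have h1 : (m + 1) / 2 = k + 1 := by omega
    have h2 : m / 2 = k := by omega
    have h3 : ¬ (m % 2 = 0) := by omega
    have h5 : k + 1 - 1 = k := by ring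
    rw [engelOffset, engelOffset, stepVec, if_neg h3, h1, h2, engelCum_step d A (k + 1), h5]
    push_cast
    module

lemma norm_sq_eq_sum {d : ℕ} (y : Euc d) : ‖y‖ ^ 2 = ∑ k, (y k) ^ 2 := by
  rw [EuclideanSpace.norm_eq, Real.sq_sqrt (by positivity)]
  simp [Real.norm_eq_abs, sq_abs]

lemma sum_sq_two {d : ℕ} (y : Euc d) (i j : Fin d) (hij : i ≠ j)
    (h0 : ∀ k, k ≠ i → k ≠ j → y k = 0) : ‖y‖ ^ 2 = (y i) ^ 2 + (y j) ^ 2 := by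
  rw [norm_sq_eq_sum, ← Finset.sum_subset (Finset.subset_univ ({i, j} : Finset (Fin d)))]
  · rw [Finset.sum_pair hij]
  · intro k _ hk
    simp only [Finset.mem_insert, Finset.mem_singleton] at hk
    push_neg at hk
    rw [h0 k hk.1 hk.2]
    ring

lemma sum_sq_ge {d : ℕ} (y : Euc d) (i j : Fin d) (hij : i ≠ j) :
    (y i) ^ 2 + (y j) ^ 2 ≤ ‖y‖ ^ 2 := by
  rw [norm_sq_eq_sum, ← Finset.sum_pair (f := fun k => (y k) ^ 2) hij]
  exact Finset.sum_le_sum_of_subset_of_nonneg (Finset.subset_univ _)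
    (fun k _ _ => sq_nonneg _)

lemma key_ineq {d : ℕ} (a b δ : ℝ) (hδ : 0 < δ) (hδa : δ < a)
    (v w : Euc d) (iv k1 : Fin d) (hk1 : k1 ≠ iv)
    (hviv : v iv = 2 * b) (hk1le : |v k1| ≤ δ)
    (hv0 : ∀ k, k ≠ iv → k ≠ k1 → v k = 0)
    (hw0 : w iv = 0) (hwmul : ∀ k : Fin d, k ≠ iv → ∃ n : ℤ, w k = 2 * a * n)
    (hwne : w ≠ 0) : ‖v‖ < ‖v - w‖ := by
  obtain ⟨k0, hk0⟩ : ∃ k0, w k0 ≠ 0 := by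
    by_contra h
    push_neg at h
    exact hwne (by ext k; exact h k)
  have hk0iv : k0 ≠ iv := fun h => hk0 (h ▸ hw0)
  obtain ⟨n, hn⟩ := hwmul k0 hk0iv
  have hnz : n ≠ 0 := by
    intro h
    apply hk0
    rw [hn, h]
    norm_num
  have hwk0 : 2 * a ≤ |w k0| := by
    rw [hn, abs_mul]
    have h1 : (1 : ℝ) ≤ |(n : ℝ)| := by
      rw [← Int.cast_abs]
      exact_mod_cast Int.one_le_abs hnz
    have h2 : |2 * a| = 2 * a := abs_of_pos (by linarith)
    nlinarith [abs_nonneg ((n : ℝ))]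
  have hvk0le : |v k0| ≤ δ := by
    by_cases h : k0 = k1
    · rw [h]; exact hk1le
    · rw [hv0 k0 hk0iv h]; simpa using hδ.le
  have h2 : ‖v‖ ^ 2 ≤ 4 * b ^ 2 + δ ^ 2 := by
    rw [sum_sq_two v iv k1 (Ne.symm hk1) hv0, hviv]
    nlinarith [sq_abs (v k1), abs_nonneg (v k1)]
  have hviv' : (v - w) iv = 2 * b := by
    rw [PiLp.sub_apply, hviv, hw0, sub_zero]
  have hk0' : 2 * a - δ ≤ |(v - w) k0| := by
    rw [PiLp.sub_apply]
    calc 2 * a - δ ≤ |w k0| - |v k0| := by linarith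
      _ ≤ |v k0 - w k0| := by
          rw [abs_sub_comm]
          exact abs_sub_abs_le_abs_sub _ _
  have h3 : (2 * b) ^ 2 + (2 * a - δ) ^ 2 ≤ ‖v - w‖ ^ 2 := by
    have hge := sum_sq_ge (v - w) iv k0 (Ne.symm hk0iv)
    have hsq : (2 * a - δ) ^ 2 ≤ ((v - w) k0) ^ 2 := by
      nlinarith [sq_abs ((v - w) k0), hk0', hδ, hδa]
    rw [hviv'] at hge
    linarith
  have hd2 : δ ^ 2 < (2 * a - δ) ^ 2 := by nlinarith
  have hfin : ‖v‖ ^ 2 < ‖v - w‖ ^ 2 := by nlinarith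
  by_contra hcon
  push_neg at hcon
  have := pow_le_pow_left₀ (norm_nonneg _) hcon 2
  linarith

/-- Lemma 5.3: for `0 < δ < a < b`, the chain `(x_j)` through `x ∈ X_p`
(defined by `x₀ = x`, `x_{j+1} = x_j + 2b·e_d` if `p+j` is even, and
`x_{j+1} = x_j + 2b·e_d + δ·u_i` if `p+j = 2i-1` is odd) satisfies: `x_j` lies in layer
`X_{p+j}` and is the unique point of that layer closest to `x_{j+1}` and to `x_{j-1}`,
with `(|x_j - x_{j-1}|, |x_{j+1} - x_j|) = (2b, √(δ²+4b²))` if `p+j` is odd and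
`(√(δ²+4b²), 2b)` if `p+j` is even. -/
theorem engel_chain_closest (d : ℕ) (hd : 2 ≤ d) (A : ℤ → ℤ) (hA : EngelSeq d A)
    (a b δ : ℝ) (hδ : 0 < δ) (hδa : δ < a) (hab : a < b)
    (p : ℤ) (x : Euc d) (hx : x ∈ engelLayer d A a b δ p)
    (c : ℤ → Euc d) (hc0 : c 0 = x)
    (hceven : ∀ j : ℤ, (p + j) % 2 = 0 → c (j + 1) = c j + (2 * b) • eVec d d)
    (hcodd : ∀ j i : ℤ, p + j = 2 * i - 1 →
      c (j + 1) = c j + (2 * b) • eVec d d + δ • engelU d A i) :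
    ∀ j : ℤ,
      c j ∈ engelLayer d A a b δ (p + j) ∧
      (∀ z ∈ engelLayer d A a b δ (p + j), z ≠ c j →
        dist (c (j + 1)) (c j) < dist (c (j + 1)) z ∧
        dist (c (j - 1)) (c j) < dist (c (j - 1)) z) ∧
      ((p + j) % 2 ≠ 0 → dist (c j) (c (j - 1)) = 2 * b ∧
        dist (c (j + 1)) (c j) = Real.sqrt (δ ^ 2 + 4 * b ^ 2)) ∧
      ((p + j) % 2 = 0 → dist (c j) (c (j - 1)) = Real.sqrt (δ ^ 2 + 4 * b ^ 2) ∧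
        dist (c (j + 1)) (c j) = 2 * b) := by
  have hb : 0 < b := hδ.trans (hδa.trans hab)
  have hd1 : d - 1 < d := by omega
  set iv : Fin d := ⟨d - 1, hd1⟩ with hiv_def
  have hiv : (iv : ℕ) = d - 1 := rfl
  have heVd : eVec d d = EuclideanSpace.single iv 1 := by
    rw [eVec, dif_pos hd1]
  -- grid membership of x
  have hx' : x ∈ engelOffset d A b δ p +ᵥ engelGrid d a := hx
  obtain ⟨g, hg, hxg⟩ := Set.mem_vadd_set.mp hx'
  rw [vadd_eq_add] at hxg
  -- chain step
  have hstep : ∀ j : ℤ, c (j + 1) = c j + stepVec d A b δ (p + j) := by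
    intro j
    rcases Int.even_or_odd (p + j) with ⟨k, hk⟩ | ⟨k, hk⟩
    · rw [hceven j (by omega), stepVec, if_pos (by omega : (p + j) % 2 = 0), add_zero]
    · have h1 : (p + j + 1) / 2 = k + 1 := by omega
      rw [hcodd j (k + 1) (by omega), stepVec, if_neg (by omega : ¬ (p + j) % 2 = 0), h1,
        add_assoc]
  -- closed formula
  have hkey : ∀ j : ℤ, c j = engelOffset d A b δ (p + j) + g := by
    intro j
    induction j using Int.induction_on with
    | zero => rw [add_zero, hc0, ← hxg]
    | succ k ih =>
        have e1 : p + ((k : ℤ) + 1) = (p + k) + 1 := by ring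
        rw [hstep k, ih, e1, engelOffset_step]
        abel
    | pred k ih =>
        have e0 : (-(k : ℤ) - 1) + 1 = -(k : ℤ) := by ring
        have h2 := hstep (-(k : ℤ) - 1)
        rw [e0] at h2
        have e1 : p + (-(k : ℤ) - 1) + 1 = p + -(k : ℤ) := by ring
        have h3 := engelOffset_step d A b δ (p + (-(k : ℤ) - 1))
        rw [e1] at h3
        show c (-(k : ℤ) - 1) = engelOffset d A b δ (p + (-(k : ℤ) - 1)) + g
        have h4 : c (-(k : ℤ) - 1) = c (-(k : ℤ)) - stepVec d A b δ (p + (-(k : ℤ) - 1)) := by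
          rw [h2]; abel
        rw [h4, ih, h3]
        abel
  -- membership
  have hmem : ∀ j : ℤ, c j ∈ engelLayer d A a b δ (p + j) := by
    intro j
    exact Set.mem_vadd_set.mpr ⟨g, hg, by rw [vadd_eq_add, ← hkey j]⟩
  -- description of engelU
  have hU : ∀ i : ℤ, ∃ (k1 : Fin d) (ε : ℝ), (k1 : ℕ) < d - 1 ∧ |ε| = 1 ∧
      engelU d A i = ε • EuclideanSpace.single k1 1 := by
    intro i
    obtain ⟨h1, h2⟩ := hA.1 i
    refine ⟨⟨(A i).natAbs - 1, by omega⟩, if 0 < A i then 1 else -1,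
      by show (A i).natAbs - 1 < d - 1; omega, by split <;> norm_num, ?_⟩
    rw [engelU, eVec, dif_pos (by omega : (A i).natAbs - 1 < d)]
  -- coordinate description of stepVec
  have hstepSpec : ∀ m : ℤ, ∃ k1 : Fin d, k1 ≠ iv ∧
      stepVec d A b δ m iv = 2 * b ∧
      (∀ k, k ≠ iv → k ≠ k1 → stepVec d A b δ m k = 0) ∧
      (m % 2 = 0 → stepVec d A b δ m k1 = 0) ∧
      (m % 2 ≠ 0 → |stepVec d A b δ m k1| = δ) := by
    intro m
    by_cases hm : m % 2 = 0
    · refine ⟨⟨0, by omega⟩, ?_, ?_, ?_, fun _ => ?_, fun h => absurd hm h⟩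
      · intro h
        have := congrArg Fin.val h
        simp only [hiv] at this
        omega
      · rw [stepVec, if_pos hm, heVd]
        simp [EuclideanSpace.single_apply]
      · intro k hk _
        rw [stepVec, if_pos hm, heVd]
        simp [EuclideanSpace.single_apply, hk]
      · rw [stepVec, if_pos hm, heVd]
        have : (⟨0, by omega⟩ : Fin d) ≠ iv := by
          intro h
          have := congrArg Fin.val h
          simp only [hiv] at this
          omega
        simp [EuclideanSpace.single_apply, this]
    · obtain ⟨k1, ε, hk1lt, hε, hu⟩ := hU ((m + 1) / 2)
      have hk1iv : k1 ≠ iv := by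
        intro h
        have := congrArg Fin.val h
        rw [hiv] at this
        omega
      refine ⟨k1, hk1iv, ?_, ?_, fun h => absurd h hm, fun _ => ?_⟩
      · rw [stepVec, if_neg hm, heVd, hu]
        simp [EuclideanSpace.single_apply, (Ne.symm hk1iv : iv ≠ k1)]
      · intro k hk hk1
        rw [stepVec, if_neg hm, heVd, hu]
        simp [EuclideanSpace.single_apply, hk, hk1]
      · rw [stepVec, if_neg hm, heVd, hu]
        simp [EuclideanSpace.single_apply, hk1iv, abs_mul, hε, abs_of_pos hδ]
  -- norms of stepVec
  have hnorm_even : ∀ m : ℤ, m % 2 = 0 → ‖stepVec d A b δ m‖ = 2 * b := by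
    intro m hm
    obtain ⟨k1, hk1, hviv, hv0, hvk1, _⟩ := hstepSpec m
    have h1 : ‖stepVec d A b δ m‖ ^ 2 = (2 * b) ^ 2 := by
      rw [sum_sq_two _ iv k1 (Ne.symm hk1) hv0, hviv, hvk1 hm]
      ring
    rw [← Real.sqrt_sq (norm_nonneg _), h1, Real.sqrt_sq (by linarith)]
  have hnorm_odd : ∀ m : ℤ, m % 2 ≠ 0 →
      ‖stepVec d A b δ m‖ = Real.sqrt (δ ^ 2 + 4 * b ^ 2) := by
    intro m hm
    obtain ⟨k1, hk1, hviv, hv0, _, hvk1⟩ := hstepSpec m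
    have h1 : ‖stepVec d A b δ m‖ ^ 2 = δ ^ 2 + 4 * b ^ 2 := by
      rw [sum_sq_two _ iv k1 (Ne.symm hk1) hv0, hviv, ← sq_abs (stepVec d A b δ m k1),
        hvk1 hm]
      ring
    rw [← Real.sqrt_sq (norm_nonneg _), h1]
  -- main inequality
  have hineq : ∀ (m : ℤ) (w : Euc d), w iv = 0 →
      (∀ k : Fin d, k ≠ iv → ∃ n : ℤ, w k = 2 * a * n) → w ≠ 0 →
      ‖stepVec d A b δ m‖ < ‖stepVec d A b δ m - w‖ := by
    intro m w hw0 hwmul hwne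
    obtain ⟨k1, hk1, hviv, hv0, hvk1e, hvk1o⟩ := hstepSpec m
    have hk1le : |stepVec d A b δ m k1| ≤ δ := by
      by_cases hm : m % 2 = 0
      · rw [hvk1e hm]; simpa using hδ.le
      · rw [hvk1o hm]
    exact key_ineq a b δ hδ hδa _ w iv k1 hk1 hviv hk1le hv0 hw0 hwmul hwne
  -- assemble
  intro j
  have hsB := hstep (j - 1)
  have eB : j - 1 + 1 = j := by ring
  rw [eB] at hsB
  refine ⟨hmem j, ?_, ?_, ?_⟩
  · intro z hz hzne
    have hz' : z ∈ engelOffset d A b δ (p + j) +ᵥ engelGrid d a := hz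
    obtain ⟨g', hg', hzg⟩ := Set.mem_vadd_set.mp hz'
    rw [vadd_eq_add] at hzg
    set w : Euc d := z - c j with hw
    have hwc : ∀ k : Fin d, w k = g' k - g k := by
      intro k
      rw [hw]
      rw [PiLp.sub_apply, ← hzg, hkey j, PiLp.add_apply, PiLp.add_apply]
      ring
    have hwiv : w iv = 0 := by
      rw [hwc, (hg iv).2 hiv, (hg' iv).2 hiv, sub_zero]
    have hwmul : ∀ k : Fin d, k ≠ iv → ∃ n : ℤ, w k = 2 * a * n := by
      intro k hk
      have hklt : (k : ℕ) < d - 1 := by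
        have : (k : ℕ) ≠ d - 1 := fun h => hk (Fin.ext (by rw [h, hiv]))
        omega
      obtain ⟨m1, hm1⟩ := (hg' k).1 hklt
      obtain ⟨m2, hm2⟩ := (hg k).1 hklt
      exact ⟨m1 - m2, by rw [hwc, hm1, hm2]; push_cast; ring⟩
    have hwne : w ≠ 0 := sub_ne_zero_of_ne hzne
    constructor
    · have hfwd : c (j + 1) - z = stepVec d A b δ (p + j) - w := by
        rw [hstep j, hw]; abel
      have hL : c (j + 1) - c j = stepVec d A b δ (p + j) := by
        rw [hstep j]; abel
      rw [dist_eq_norm, dist_eq_norm, hL, hfwd]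
      exact hineq (p + j) w hwiv hwmul hwne
    · have h1 : c (j - 1) - c j = -(stepVec d A b δ (p + (j - 1))) := by
        rw [hsB]; abel
      have h2 : c (j - 1) - z = -(stepVec d A b δ (p + (j - 1)) - (-w)) := by
        rw [hw, hsB]; abel
      rw [dist_eq_norm, dist_eq_norm, h1, h2, norm_neg, norm_neg]
      refine hineq (p + (j - 1)) (-w) ?_ ?_ (neg_ne_zero.mpr hwne)
      · rw [PiLp.neg_apply, hwiv, neg_zero]
      · intro k hk
        obtain ⟨n, hn⟩ := hwmul k hk
        refine ⟨-n, ?_⟩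
        rw [PiLp.neg_apply, hn]
        push_cast
        ring
  · intro hodd
    constructor
    · rw [hsB, dist_eq_norm, add_sub_cancel_left]
      exact hnorm_even (p + (j - 1)) (by omega)
    · rw [hstep j, dist_eq_norm, add_sub_cancel_left]
      exact hnorm_odd (p + j) hodd
  · intro heven
    constructor
    · rw [hsB, dist_eq_norm, add_sub_cancel_left]
      exact hnorm_odd (p + (j - 1)) (by omega)
    · rw [hstep j, dist_eq_norm, add_sub_cancel_left]
      exact hnorm_even (p + j) heven
end
end

section
/- Let X = X(A,a,b,δ) be an Engel set with 0 < δ < a < b, and let φ be an isometry of ℝ^d mapping a point x ∈ X_p to x' ∈ X_{p'} and the cluster C_x(2kR) onto C_{x'}(2kR) for some integer k ≥ 1. Then the linear part B_φ of φ permutes the signed horizontal basis vectors: B_φ e_s = ±e_{σ(s)} for some permutation σ of {1,…,d−1}; and B_φ e_d = e_d if p − p' is even, while B_φ e_d = −e_d if p − p' is odd. -/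
noncomputable section
open scoped Pointwise

namespace EngelAux

variable {d : ℕ} {A : ℤ → ℤ} {a b δ : ℝ}

lemma eVec_apply {k : ℕ} (h : k - 1 < d) (j : Fin d) :
    eVec d k j = if (j : ℕ) = k - 1 then 1 else 0 := by
  rw [eVec, dif_pos h, EuclideanSpace.single_apply]
  simp [Fin.ext_iff]

lemma engelU_last (hA : EngelSeq d A) (hd : 2 ≤ d) (i : ℤ) :
    engelU d A i ⟨d - 1, by omega⟩ = 0 := by
  obtain ⟨h1, h2⟩ := hA.1 i
  rw [engelU, PiLp.smul_apply, eVec_apply (show (A i).natAbs - 1 < d by omega),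
    Fin.val_mk, if_neg (show ¬(d - 1 = (A i).natAbs - 1) by omega)]
  simp

lemma engelCum_last (hA : EngelSeq d A) (hd : 2 ≤ d) (i : ℤ) :
    engelCum d A i ⟨d - 1, by omega⟩ = 0 := by
  rw [engelCum]
  split
  · rw [WithLp.ofLp_sum, Finset.sum_apply]
    exact Finset.sum_eq_zero fun j _ => engelU_last hA hd _
  · rw [PiLp.neg_apply, WithLp.ofLp_sum, Finset.sum_apply]
    simp [engelU_last hA hd]

lemma engelOffset_last (hA : EngelSeq d A) (hd : 2 ≤ d) (m : ℤ) :
    engelOffset d A b δ m ⟨d - 1, by omega⟩ = 2 * b * m := by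
  rw [engelOffset, PiLp.add_apply, PiLp.smul_apply, PiLp.smul_apply,
    eVec_apply (by omega), if_pos rfl, engelCum_last hA hd]
  simp

lemma grid_sub {x y : Euc d} (hx : x ∈ engelGrid d a) (hy : y ∈ engelGrid d a) :
    x - y ∈ engelGrid d a := by
  intro j
  obtain ⟨hx1, hx2⟩ := hx j
  obtain ⟨hy1, hy2⟩ := hy j
  constructor
  · intro hj
    obtain ⟨m, hm⟩ := hx1 hj
    obtain ⟨n, hn⟩ := hy1 hj
    exact ⟨m - n, by rw [PiLp.sub_apply, hm, hn]; push_cast; ring⟩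
  · intro hj
    rw [PiLp.sub_apply, hx2 hj, hy2 hj, sub_zero]

lemma grid_add {x y : Euc d} (hx : x ∈ engelGrid d a) (hy : y ∈ engelGrid d a) :
    x + y ∈ engelGrid d a := by
  intro j
  obtain ⟨hx1, hx2⟩ := hx j
  obtain ⟨hy1, hy2⟩ := hy j
  constructor
  · intro hj
    obtain ⟨m, hm⟩ := hx1 hj
    obtain ⟨n, hn⟩ := hy1 hj
    exact ⟨m + n, by rw [PiLp.add_apply, hm, hn]; push_cast; ring⟩
  · intro hj
    rw [PiLp.add_apply, hx2 hj, hy2 hj, add_zero]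

lemma grid_basis (hd : 2 ≤ d) {s : ℕ} (hs : s < d - 1) :
    (2 * a) • eVec d (s + 1) ∈ engelGrid d a := by
  intro j
  constructor
  · intro hj
    rw [PiLp.smul_apply, eVec_apply (by omega)]
    by_cases h : (j : ℕ) = s + 1 - 1
    · exact ⟨1, by rw [if_pos h]; push_cast; simp⟩
    · exact ⟨0, by rw [if_neg h]; push_cast; simp⟩
  · intro hj
    rw [PiLp.smul_apply, eVec_apply (by omega), if_neg (by omega)]
    simp

lemma mem_layer_iff {y : Euc d} {m : ℤ} :
    y ∈ engelLayer d A a b δ m ↔ y - engelOffset d A b δ m ∈ engelGrid d a := by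
  rw [engelLayer, Set.mem_vadd_set_iff_neg_vadd_mem]
  rw [vadd_eq_add, neg_add_eq_sub]

lemma layer_last (hA : EngelSeq d A) (hd : 2 ≤ d) {y : Euc d} {m : ℤ}
    (hy : y ∈ engelLayer d A a b δ m) : y ⟨d - 1, by omega⟩ = 2 * b * m := by
  have h := ((mem_layer_iff.mp hy) ⟨d - 1, by omega⟩).2 rfl
  rw [PiLp.sub_apply, engelOffset_last hA hd] at h
  linarith

lemma layer_add {x g : Euc d} {m : ℤ} (hx : x ∈ engelLayer d A a b δ m)
    (hg : g ∈ engelGrid d a) : x + g ∈ engelLayer d A a b δ m := by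
  rw [mem_layer_iff] at hx ⊢
  have := grid_add hx hg
  convert this using 1
  abel

lemma engelCum_succ (i : ℤ) :
    engelCum d A (i + 1) = engelCum d A i + engelU d A (i + 1) := by
  rcases lt_trichotomy i (-1) with h | h | h
  · rw [engelCum, engelCum, if_neg (by omega), if_neg (by omega)]
    have h1 : (-i).toNat = (-(i + 1)).toNat + 1 := by omega
    rw [h1, Finset.sum_range_succ]
    have h2 : -(((-(i + 1)).toNat : ℕ) : ℤ) = i + 1 := by omega
    rw [h2]
    abel
  · subst h
    norm_num [engelCum, Finset.sum_range_one]
  · rw [engelCum, engelCum, if_pos (by omega), if_pos (by omega)]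
    have h1 : (i + 1).toNat = i.toNat + 1 := by omega
    rw [h1, Finset.sum_range_succ]
    have h2 : ((i.toNat : ℕ) : ℤ) + 1 = i + 1 := by omega
    rw [h2]

lemma engelOffset_succ_even (m : ℤ) (h : 2 ∣ m) :
    engelOffset d A b δ (m + 1) = engelOffset d A b δ m + (2 * b) • eVec d d := by
  rw [engelOffset, engelOffset]
  have h2 : (m + 1) / 2 = m / 2 := by omega
  rw [h2]
  push_cast
  module

lemma engelOffset_succ_odd (m : ℤ) (h : ¬ 2 ∣ m) :
    engelOffset d A b δ (m + 1) =
      engelOffset d A b δ m + (2 * b) • eVec d d + δ • engelU d A (m / 2 + 1) := by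
  have h2 : (m + 1) / 2 = m / 2 + 1 := by omega
  rw [engelOffset, engelOffset, h2, engelCum_succ]
  push_cast
  module

lemma deltaU_not_in_grid (hA : EngelSeq d A) (hd : 2 ≤ d) (hδ : 0 < δ) (hδa : δ < a)
    (i : ℤ) : δ • engelU d A i ∉ engelGrid d a := by
  intro hmem
  obtain ⟨h1, h2⟩ := hA.1 i
  set s := (A i).natAbs with hs
  have hsd : s - 1 < d := by omega
  obtain ⟨n, hn⟩ := (hmem ⟨s - 1, hsd⟩).1 (by simpa using by omega : ((⟨s - 1, hsd⟩ : Fin d) : ℕ) < d - 1)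
  rw [PiLp.smul_apply, engelU, PiLp.smul_apply, eVec_apply hsd, Fin.val_mk, if_pos rfl] at hn
  have hn1 : (n : ℝ) ≥ 1 ∨ (n : ℝ) ≤ -1 ∨ (n : ℝ) = 0 := by
    rcases lt_trichotomy n 0 with h | h | h
    · right; left
      have : n ≤ -1 := by omega
      calc (n : ℝ) ≤ (-1 : ℤ) := by exact_mod_cast this
      _ = -1 := by norm_num
    · right; right; exact_mod_cast h
    · left; exact_mod_cast h
  by_cases hAi : 0 < A i <;> simp [hAi, smul_eq_mul] at hn <;>
    rcases hn1 with h | h | h <;> nlinarith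

lemma up_mem_even {x : Euc d} {p : ℤ} (hx : x ∈ engelLayer d A a b δ p) (hp : 2 ∣ p) :
    x + (2 * b) • eVec d d ∈ engelLayer d A a b δ (p + 1) := by
  rw [mem_layer_iff] at hx ⊢
  rw [engelOffset_succ_even p hp]
  convert hx using 1
  abel

lemma down_mem_odd {x : Euc d} {p : ℤ} (hx : x ∈ engelLayer d A a b δ p) (hp : ¬ 2 ∣ p) :
    x - (2 * b) • eVec d d ∈ engelLayer d A a b δ (p - 1) := by
  rw [mem_layer_iff] at hx ⊢
  have he := engelOffset_succ_even (d := d) (A := A) (b := b) (δ := δ) (p - 1) (by omega)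
  rw [show p - 1 + 1 = p by ring] at he
  rw [he] at hx
  convert hx using 1
  abel

lemma layer_eq_of_mem (hA : EngelSeq d A) (hd : 2 ≤ d) (hb : 0 < b) {y : Euc d} {m m' : ℤ}
    (h1 : y ∈ engelLayer d A a b δ m) (h2 : y ∈ engelLayer d A a b δ m') : m = m' := by
  have e1 := layer_last hA hd h1
  have e2 := layer_last hA hd h2
  rw [e1] at e2
  have hb2 : (2 : ℝ) * b ≠ 0 := by positivity
  have : (m : ℝ) = m' := mul_left_cancel₀ hb2 e2
  exact_mod_cast this

lemma eVec_d_last (hd : 2 ≤ d) : eVec d d ⟨d - 1, by omega⟩ = 1 := by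
  rw [eVec_apply (by omega), Fin.val_mk, if_pos rfl]

lemma up_not_mem_odd (hA : EngelSeq d A) (hd : 2 ≤ d) (hb : 0 < b) (hδ : 0 < δ) (hδa : δ < a)
    {x : Euc d} {p : ℤ} (hx : x ∈ engelLayer d A a b δ p) (hp : ¬ 2 ∣ p) :
    x + (2 * b) • eVec d d ∉ engelSet d A a b δ := by
  intro hmem
  rw [engelSet, Set.mem_iUnion] at hmem
  obtain ⟨m, hm⟩ := hmem
  have h1 := layer_last hA hd hm
  have h2 := layer_last hA hd hx
  rw [PiLp.add_apply, PiLp.smul_apply, eVec_d_last hd, h2, smul_eq_mul, mul_one] at h1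
  have hm' : m = p + 1 := by
    have h3 : (2 : ℝ) * b * m = 2 * b * ((p : ℝ) + 1) := by linarith
    have h4 : (m : ℝ) = (p : ℝ) + 1 := by
      have : (2 : ℝ) * b ≠ 0 := by positivity
      exact mul_left_cancel₀ this h3
    exact_mod_cast h4
  subst hm'
  rw [mem_layer_iff, engelOffset_succ_odd p hp] at hm
  rw [mem_layer_iff] at hx
  have hgrid : δ • engelU d A (p / 2 + 1) ∈ engelGrid d a := by
    have := grid_sub hx hm
    convert this using 1
    abel
  exact deltaU_not_in_grid hA hd hδ hδa _ hgrid

lemma down_not_mem_even (hA : EngelSeq d A) (hd : 2 ≤ d) (hb : 0 < b) (hδ : 0 < δ) (hδa : δ < a)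
    {x : Euc d} {p : ℤ} (hx : x ∈ engelLayer d A a b δ p) (hp : 2 ∣ p) :
    x - (2 * b) • eVec d d ∉ engelSet d A a b δ := by
  intro hmem
  rw [engelSet, Set.mem_iUnion] at hmem
  obtain ⟨m, hm⟩ := hmem
  have h1 := layer_last hA hd hm
  have h2 := layer_last hA hd hx
  rw [PiLp.sub_apply, PiLp.smul_apply, eVec_d_last hd, h2, smul_eq_mul, mul_one] at h1
  have hm' : m = p - 1 := by
    have h3 : (2 : ℝ) * b * m = 2 * b * ((p : ℝ) - 1) := by linarith
    have h4 : (m : ℝ) = (p : ℝ) - 1 := by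
      have : (2 : ℝ) * b ≠ 0 := by positivity
      exact mul_left_cancel₀ this h3
    push_cast at h4 ⊢
    exact_mod_cast h4
  subst hm'
  have he := engelOffset_succ_odd (d := d) (A := A) (b := b) (δ := δ) (p - 1) (by omega)
  rw [show p - 1 + 1 = p by ring] at he
  rw [mem_layer_iff] at hm hx
  rw [he] at hx
  have hgrid : δ • engelU d A ((p - 1) / 2 + 1) ∈ engelGrid d a := by
    have := grid_sub hm hx
    convert this using 1
    abel
  exact deltaU_not_in_grid hA hd hδ hδa _ hgrid

lemma abs_coord_le_norm (v : Euc d) (j : Fin d) : |v j| ≤ ‖v‖ := by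
  rw [EuclideanSpace.norm_eq]
  rw [show |v j| = Real.sqrt ((v j) ^ 2) from (Real.sqrt_sq_eq_abs _).symm]
  apply Real.sqrt_le_sqrt
  have := Finset.single_le_sum (f := fun i => ‖v i‖ ^ 2)
    (fun i _ => by positivity) (Finset.mem_univ j)
  simpa [Real.norm_eq_abs, sq_abs] using this

lemma norm_sq_eq (v : Euc d) : ‖v‖ ^ 2 = ∑ j, (v j) ^ 2 := by
  rw [EuclideanSpace.norm_eq, Real.sq_sqrt (by positivity)]
  simp [Real.norm_eq_abs, sq_abs]

lemma close_points (hA : EngelSeq d A) (hd : 2 ≤ d) (ha : 0 < a) (hab : a < b)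
    {x y : Euc d} {p : ℤ} (hx : x ∈ engelLayer d A a b δ p)
    (hy : y ∈ engelSet d A a b δ) (hdist : dist y x ≤ 2 * a) :
    y = x ∨ ∃ t : Fin (d - 1),
      y = x + (2 * a) • eVec d ((t : ℕ) + 1) ∨ y = x - (2 * a) • eVec d ((t : ℕ) + 1) := by
  rw [engelSet, Set.mem_iUnion] at hy
  obtain ⟨m, hm⟩ := hy
  have hml := layer_last hA hd hm
  have hxl := layer_last hA hd hx
  have hnorm : ‖y - x‖ ≤ 2 * a := by rwa [← dist_eq_norm]
  have hmp : m = p := by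
    by_contra hne
    have h1 : |(y - x) ⟨d - 1, by omega⟩| ≤ 2 * a :=
      le_trans (abs_coord_le_norm _ _) hnorm
    rw [PiLp.sub_apply, hml, hxl, ← mul_sub, abs_mul,
      abs_of_pos (show (0 : ℝ) < 2 * b by linarith)] at h1
    have h2 : (1 : ℝ) ≤ |(m : ℝ) - (p : ℝ)| := by
      have h3 : (1 : ℤ) ≤ |m - p| := Int.one_le_abs (by omega)
      exact_mod_cast h3
    nlinarith
  subst hmp
  have hw : y - x ∈ engelGrid d a := by
    have := grid_sub (mem_layer_iff.mp hm) (mem_layer_iff.mp hx)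
    convert this using 1
    abel
  set w := y - x with hwdef
  have hcoords : ∀ j : Fin d, ∃ n : ℤ, w j = 2 * a * n := by
    intro j
    rcases (by omega : (j : ℕ) < d - 1 ∨ (j : ℕ) = d - 1) with hj | hj
    · exact (hw j).1 hj
    · exact ⟨0, by rw [(hw j).2 hj]; norm_num⟩
  choose n hn using hcoords
  have hsum : ∑ j, (w j) ^ 2 ≤ (2 * a) ^ 2 := by
    rw [← norm_sq_eq]
    nlinarith [norm_nonneg w]
  by_cases hzero : ∀ j, n j = 0
  · left
    have hw0 : w = 0 := PiLp.ext fun j => by rw [hn j, hzero j]; simp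
    have := sub_eq_zero.mp (hwdef ▸ hw0)
    exact this
  · push_neg at hzero
    obtain ⟨s, hs⟩ := hzero
    have hterm : ∀ j, (w j) ^ 2 = (2 * a) ^ 2 * ((n j : ℝ)) ^ 2 := fun j => by
      rw [hn j]; ring
    have hge1 : ∀ j, n j ≠ 0 → (1 : ℝ) ≤ ((n j : ℝ)) ^ 2 := by
      intro j hj
      have h1 : (1 : ℤ) ≤ (n j) ^ 2 := by rcases hj.lt_or_gt with h | h <;> nlinarith
      exact_mod_cast h1
    have hothers : ∀ j, j ≠ s → n j = 0 := by
      intro j hj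
      by_contra hj0
      have hsub : (w s) ^ 2 + (w j) ^ 2 ≤ ∑ i, (w i) ^ 2 := by
        have h1 := Finset.sum_le_sum_of_subset_of_nonneg
          (Finset.subset_univ {s, j}) (fun i _ _ => sq_nonneg (w i))
        rwa [Finset.sum_pair (Ne.symm hj)] at h1
      have := hge1 s hs
      have := hge1 j hj0
      nlinarith [hterm s, hterm j]
    have hns : n s = 1 ∨ n s = -1 := by
      have h1 : (w s) ^ 2 ≤ ∑ i, (w i) ^ 2 :=
        Finset.single_le_sum (f := fun i => (w i) ^ 2) (fun i _ => sq_nonneg _)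
          (Finset.mem_univ s)
      have h2 : ((n s : ℝ)) ^ 2 ≤ 1 := by nlinarith [hterm s, mul_pos ha ha]
      have h3 : (n s) ^ 2 ≤ 1 := by exact_mod_cast h2
      have h4 : -1 ≤ n s ∧ n s ≤ 1 := by constructor <;> nlinarith
      omega
    have hslt : (s : ℕ) < d - 1 := by
      rcases (by omega : (s : ℕ) < d - 1 ∨ (s : ℕ) = d - 1) with h | h
      · exact h
      · exfalso
        have h0 : w s = 0 := (hw s).2 h
        rw [hn s] at h0
        rcases hns with h1 | h1 <;> rw [h1] at h0 <;> push_cast at h0 <;> nlinarith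
    right
    refine ⟨⟨(s : ℕ), hslt⟩, ?_⟩
    have hwj : ∀ ε : ℝ, (ε = 1 ∨ ε = -1) → (n s : ℝ) = ε →
        w = ε • ((2 * a) • eVec d ((s : ℕ) + 1)) := by
      intro ε hε hnsε
      ext j
      rw [PiLp.smul_apply, PiLp.smul_apply, eVec_apply (show (s : ℕ) + 1 - 1 < d by omega)]
      by_cases hj : j = s
      · rw [hj, if_pos (by omega), hn s, hnsε]
        simp [smul_eq_mul]
        ring
      · rw [if_neg (by
          intro hc
          exact hj (Fin.ext (by omega))), hn j, hothers j hj]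
        simp
    rcases hns with h1 | h1
    · left
      have hw1 := hwj 1 (Or.inl rfl) (by exact_mod_cast h1)
      rw [one_smul] at hw1
      have h2 : y - x = (2 * a) • eVec d ((s : ℕ) + 1) := by rw [← hwdef]; exact hw1
      exact sub_eq_iff_eq_add'.mp h2
    · right
      have hw1 := hwj (-1) (Or.inr rfl) (by rw [h1]; push_cast; ring)
      have h2 : y - x = -((2 * a) • eVec d ((s : ℕ) + 1)) := by
        rw [← hwdef, hw1, neg_one_smul]
      rw [sub_eq_add_neg]
      exact sub_eq_iff_eq_add'.mp h2

lemma eVec_norm {k : ℕ} (h : k - 1 < d) : ‖eVec d k‖ = 1 := by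
  rw [eVec, dif_pos h, EuclideanSpace.norm_single, norm_one]

lemma inner_eVec_right (v : Euc d) {kk : ℕ} (h : kk - 1 < d) :
    (inner ℝ v (eVec d kk) : ℝ) = v ⟨kk - 1, h⟩ := by
  rw [eVec, dif_pos h, EuclideanSpace.inner_single_right]
  simp

lemma eVec_eq_imp (hd : 2 ≤ d) {s1 s2 : ℕ} (h1 : s1 < d - 1) (h2 : s2 < d - 1)
    (h : eVec d (s1 + 1) = eVec d (s2 + 1)) : s1 = s2 := by
  by_contra hne
  have hh := congrFun (congrArg WithLp.ofLp h) (⟨s1, by omega⟩ : Fin d)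
  rw [eVec_apply (by omega), eVec_apply (by omega), Fin.val_mk,
    if_pos (by omega), if_neg (by omega)] at hh
  norm_num at hh

lemma eVec_ne_neg (hd : 2 ≤ d) {s1 s2 : ℕ} (h1 : s1 < d - 1) (h2 : s2 < d - 1) :
    eVec d (s1 + 1) ≠ -eVec d (s2 + 1) := by
  intro h
  have hh := congrFun (congrArg WithLp.ofLp h) (⟨s1, by omega⟩ : Fin d)
  rw [eVec_apply (by omega), PiLp.neg_apply, eVec_apply (by omega), Fin.val_mk,
    if_pos (by omega)] at hh
  by_cases hss : s1 = s2
  · rw [if_pos (by omega)] at hh; norm_num at hh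
  · rw [if_neg (by omega)] at hh; norm_num at hh

end EngelAux

/-- Lemma 5.4, linear part: if an isometry `φ` of `ℝ^d` maps `x ∈ X_p` to
`x' ∈ X_{p'}` and the cluster `C_x(2kR)` onto `C_{x'}(2kR)` (`k ≥ 1`), then the linear
part `B_φ` of `φ` (given by `B_φ v = φ(x + v) - φ(x)`) maps each `e_s`, `1 ≤ s ≤ d-1`, to
`±e_{σ(s)}` for some permutation `σ` of `{1, …, d-1}`, and maps `e_d` to `e_d` if
`p - p'` is even and to `-e_d` if `p - p'` is odd. -/
theorem engel_isometry_linear_part (d : ℕ) (hd : 2 ≤ d) (A : ℤ → ℤ) (hA : EngelSeq d A)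
    (a b δ : ℝ) (hδ : 0 < δ) (hδa : δ < a) (hab : a < b)
    (R : ℝ) (hR : R = Real.sqrt (b ^ 2 + ((d : ℝ) - 1) * a ^ 2))
    (k : ℕ) (hk : 1 ≤ k) (p p' : ℤ) (x x' : Euc d)
    (hx : x ∈ engelLayer d A a b δ p) (hx' : x' ∈ engelLayer d A a b δ p')
    (φ : Euc d ≃ᵢ Euc d) (hφx : φ x = x')
    (hφC : φ '' cluster (engelSet d A a b δ) x (2 * (k : ℝ) * R) =
      cluster (engelSet d A a b δ) x' (2 * (k : ℝ) * R)) :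
    (∃ σ : Equiv.Perm (Fin (d - 1)), ∀ s : Fin (d - 1),
      φ (x + eVec d ((s : ℕ) + 1)) - x' = eVec d ((σ s : ℕ) + 1) ∨
      φ (x + eVec d ((s : ℕ) + 1)) - x' = -eVec d ((σ s : ℕ) + 1)) ∧
    ((p - p') % 2 = 0 → φ (x + eVec d d) - x' = eVec d d) ∧
    ((p - p') % 2 ≠ 0 → φ (x + eVec d d) - x' = -eVec d d) := by
  classical
  have ha : 0 < a := hδ.trans hδa
  have hb : 0 < b := ha.trans hab
  have hd1 : (0 : ℝ) ≤ (d : ℝ) - 1 := by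
    have : (2 : ℝ) ≤ d := by exact_mod_cast hd
    linarith
  have hRnn : 0 ≤ R := hR ▸ Real.sqrt_nonneg _
  have hR2 : R ^ 2 = b ^ 2 + ((d : ℝ) - 1) * a ^ 2 := by
    rw [hR]; exact Real.sq_sqrt (by nlinarith [sq_nonneg a, sq_nonneg b])
  have hbR : b ≤ R := by nlinarith [sq_nonneg a]
  have hk1 : (1 : ℝ) ≤ (k : ℝ) := by exact_mod_cast hk
  have hb2kR : 2 * b ≤ 2 * (k : ℝ) * R := by nlinarith
  have ha2kR : 2 * a ≤ 2 * (k : ℝ) * R := by nlinarith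
  set B := φ.toRealLinearIsometryEquiv with hBdef
  have hB : ∀ v : Euc d, φ (x + v) - x' = B v := by
    intro v
    have h1 : φ (x + v) = B (x + v) + φ 0 := by
      rw [hBdef, φ.toRealLinearIsometryEquiv_apply]; abel
    have h2 : φ x = B x + φ 0 := by
      rw [hBdef, φ.toRealLinearIsometryEquiv_apply]; abel
    rw [← hφx, h1, h2, map_add]
    abel
  have htr : ∀ v : Euc d, ‖v‖ ≤ 2 * (k : ℝ) * R →
      (x + v ∈ engelSet d A a b δ ↔ x' + B v ∈ engelSet d A a b δ) := by
    intro v hv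
    have hφv : φ (x + v) = x' + B v := by
      have h0 := hB v
      rw [sub_eq_iff_eq_add] at h0
      rw [h0, add_comm]
    constructor
    · intro hX
      have hc : x + v ∈ cluster (engelSet d A a b δ) x (2 * k * R) :=
        ⟨hX, by rw [Metric.mem_closedBall, dist_comm, dist_self_add_right]; exact hv⟩
      have h1 : φ (x + v) ∈ cluster (engelSet d A a b δ) x' (2 * k * R) := by
        rw [← hφC]; exact Set.mem_image_of_mem φ hc
      rw [hφv] at h1
      exact h1.1
    · intro hX
      have hc : x' + B v ∈ cluster (engelSet d A a b δ) x' (2 * k * R) :=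
        ⟨hX, by rw [Metric.mem_closedBall, dist_comm, dist_self_add_right, B.norm_map]; exact hv⟩
      rw [← hφC] at hc
      obtain ⟨z, hz, hze⟩ := hc
      have hzv : z = x + v := φ.injective (by rw [hze, hφv])
      rw [← hzv]; exact hz.1
  -- horizontal part
  have Hs : ∀ s : Fin (d - 1), ∃ t : Fin (d - 1),
      B (eVec d ((s : ℕ) + 1)) = eVec d ((t : ℕ) + 1) ∨
      B (eVec d ((s : ℕ) + 1)) = -eVec d ((t : ℕ) + 1) := by
    intro s
    have hslt : (s : ℕ) < d - 1 := s.isLt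
    have hnes : ‖eVec d ((s : ℕ) + 1)‖ = 1 := EngelAux.eVec_norm (by omega)
    have hv : ‖(2 * a) • eVec d ((s : ℕ) + 1)‖ = 2 * a := by
      rw [norm_smul, hnes, Real.norm_eq_abs, abs_of_pos (by positivity), mul_one]
    have hXmem : x + (2 * a) • eVec d ((s : ℕ) + 1) ∈ engelSet d A a b δ := by
      rw [engelSet, Set.mem_iUnion]
      exact ⟨p, EngelAux.layer_add hx (EngelAux.grid_basis hd hslt)⟩
    have hX' : x' + B ((2 * a) • eVec d ((s : ℕ) + 1)) ∈ engelSet d A a b δ :=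
      (htr _ (by rw [hv]; exact ha2kR)).mp hXmem
    have hdist : dist (x' + B ((2 * a) • eVec d ((s : ℕ) + 1))) x' ≤ 2 * a := by
      rw [dist_comm, dist_self_add_right, B.norm_map, hv]
    rcases EngelAux.close_points hA hd ha hab hx' hX' hdist with h0 | ⟨t, ht⟩
    · exfalso
      have h1 : B ((2 * a) • eVec d ((s : ℕ) + 1)) = 0 := add_eq_left.mp h0
      have h2 : ‖(2 * a) • eVec d ((s : ℕ) + 1)‖ = 0 := by
        rw [← B.norm_map, h1, norm_zero]
      rw [hv] at h2; nlinarith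
    · refine ⟨t, ?_⟩
      have h2a : (2 * a : ℝ) ≠ 0 := by positivity
      rcases ht with h1 | h1
      · left
        have h2 : B ((2 * a) • eVec d ((s : ℕ) + 1)) = (2 * a) • eVec d ((t : ℕ) + 1) :=
          add_left_cancel h1
        rw [map_smul] at h2
        exact smul_right_injective (Euc d) h2a h2
      · right
        rw [sub_eq_add_neg] at h1
        have h2 : B ((2 * a) • eVec d ((s : ℕ) + 1)) = -((2 * a) • eVec d ((t : ℕ) + 1)) :=
          add_left_cancel h1
        rw [map_smul, ← smul_neg] at h2
        exact smul_right_injective (Euc d) h2a h2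
  choose f hf using Hs
  have hinj : Function.Injective f := by
    intro s1 s2 he
    have h1 := hf s1
    have h2 := hf s2
    rw [he] at h1
    have key : eVec d ((s1 : ℕ) + 1) = eVec d ((s2 : ℕ) + 1) ∨
        eVec d ((s1 : ℕ) + 1) = -eVec d ((s2 : ℕ) + 1) := by
      rcases h1 with h1 | h1 <;> rcases h2 with h2 | h2
      · exact Or.inl (B.injective (h1.trans h2.symm))
      · exact Or.inr (B.injective (by rw [h1, map_neg, h2, neg_neg]))
      · exact Or.inr (B.injective (by rw [h1, map_neg, h2]))
      · exact Or.inl (B.injective (h1.trans h2.symm))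
    rcases key with hk' | hk'
    · exact Fin.ext (EngelAux.eVec_eq_imp hd s1.isLt s2.isLt hk')
    · exact absurd hk' (EngelAux.eVec_ne_neg hd s1.isLt s2.isLt)
  set σ := Equiv.ofBijective f ((Finite.injective_iff_bijective).mp hinj) with hσdef
  have hσ : ∀ s, σ s = f s := fun s => rfl
  -- vertical part
  have hedlt : d - 1 < d := by omega
  have hned : ‖eVec d d‖ = 1 := EngelAux.eVec_norm hedlt
  have horth : ∀ j : Fin d, (j : ℕ) < d - 1 → B (eVec d d) j = 0 := by
    intro j hj
    obtain ⟨s, hs⟩ := σ.surjective ⟨(j : ℕ), hj⟩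
    rw [hσ] at hs
    have hfsj : ((f s : Fin (d - 1)) : ℕ) = (j : ℕ) := by rw [hs]
    have hinner : (inner ℝ (B (eVec d d)) (B (eVec d ((s : ℕ) + 1))) : ℝ)
        = inner ℝ (eVec d d) (eVec d ((s : ℕ) + 1)) := B.inner_map_map _ _
    have hzero : (inner ℝ (eVec d d) (eVec d ((s : ℕ) + 1)) : ℝ) = 0 := by
      rw [PiLp.inner_apply]
      apply Finset.sum_eq_zero
      intro i _
      rw [EngelAux.eVec_apply (show d - 1 < d by omega),
        EngelAux.eVec_apply (show (s : ℕ) + 1 - 1 < d by have := s.isLt; omega)]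
      have hslt : (s : ℕ) < d - 1 := s.isLt
      by_cases h1 : (i : ℕ) = d - 1
      · rw [if_pos h1, if_neg (by omega)]; simp
      · rw [if_neg h1]; simp
    rw [hzero] at hinner
    have hfd : ((f s : Fin (d - 1)) : ℕ) + 1 - 1 < d := by omega
    rcases hf s with h | h
    · rw [h, EngelAux.inner_eVec_right _ hfd] at hinner
      rw [show j = (⟨((f s : Fin (d - 1)) : ℕ) + 1 - 1, hfd⟩ : Fin d) from
        Fin.ext (by simp only [Fin.val_mk]; omega)]
      exact hinner
    · rw [h, inner_neg_right, neg_eq_zero, EngelAux.inner_eVec_right _ hfd] at hinner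
      rw [show j = (⟨((f s : Fin (d - 1)) : ℕ) + 1 - 1, hfd⟩ : Fin d) from
        Fin.ext (by simp only [Fin.val_mk]; omega)]
      exact hinner
  set c := B (eVec d d) ⟨d - 1, hedlt⟩ with hcdef
  have hBed : B (eVec d d) = c • eVec d d := by
    ext j
    rcases (by omega : (j : ℕ) < d - 1 ∨ (j : ℕ) = d - 1) with hj | hj
    · rw [horth j hj, PiLp.smul_apply, EngelAux.eVec_apply (show d - 1 < d by omega),
        if_neg (by omega)]
      simp
    · have hjd : j = ⟨d - 1, hedlt⟩ := Fin.ext (by simpa using hj)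
      rw [hjd, PiLp.smul_apply, EngelAux.eVec_apply (show d - 1 < d by omega), Fin.val_mk,
        if_pos rfl, smul_eq_mul, mul_one]
  have hcc : c = 1 ∨ c = -1 := by
    have h1 : ‖B (eVec d d)‖ = 1 := by rw [B.norm_map, hned]
    rw [hBed, norm_smul, hned, mul_one, Real.norm_eq_abs] at h1
    exact (abs_eq (by norm_num)).mp h1
  have hBv : B ((2 * b) • eVec d d) = (2 * b * c) • eVec d d := by
    rw [map_smul, hBed, smul_smul]
  have hnv : ‖(2 * b) • eVec d d‖ = 2 * b := by
    rw [norm_smul, hned, mul_one, Real.norm_eq_abs, abs_of_pos (by positivity)]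
  have hpar : ((p - p') % 2 = 0 → c = 1) ∧ ((p - p') % 2 ≠ 0 → c = -1) := by
    by_cases hp2 : 2 ∣ p
    · have hup : x + (2 * b) • eVec d d ∈ engelSet d A a b δ := by
        rw [engelSet, Set.mem_iUnion]; exact ⟨p + 1, EngelAux.up_mem_even hx hp2⟩
      have hX' : x' + (2 * b * c) • eVec d d ∈ engelSet d A a b δ := by
        have h0 := (htr _ (by rw [hnv]; exact hb2kR)).mp hup
        rwa [hBv] at h0
      by_cases hp2' : 2 ∣ p'
      · have hc1' : c = 1 := by
          rcases hcc with h | h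
          · exact h
          · exfalso
            rw [h, show (2 * b * (-1 : ℝ)) = -(2 * b) by ring, neg_smul,
              ← sub_eq_add_neg] at hX'
            exact EngelAux.down_not_mem_even hA hd hb hδ hδa hx' hp2' hX'
        exact ⟨fun _ => hc1', fun hne => absurd (by omega : (p - p') % 2 = 0) hne⟩
      · have hc1' : c = -1 := by
          rcases hcc with h | h
          · exfalso
            rw [h, mul_one] at hX'
            exact EngelAux.up_not_mem_odd hA hd hb hδ hδa hx' hp2' hX'
          · exact h
        exact ⟨fun heq => absurd heq (by omega), fun _ => hc1'⟩
    · have hdown : x - (2 * b) • eVec d d ∈ engelSet d A a b δ := by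
        rw [engelSet, Set.mem_iUnion]; exact ⟨p - 1, EngelAux.down_mem_odd hx hp2⟩
      have hX' : x' + (-(2 * b * c)) • eVec d d ∈ engelSet d A a b δ := by
        have h0 : x + (-((2 * b) • eVec d d)) ∈ engelSet d A a b δ := by
          rw [← sub_eq_add_neg]; exact hdown
        have h1 := (htr _ (by rw [norm_neg, hnv]; exact hb2kR)).mp h0
        rw [map_neg, hBv, ← neg_smul] at h1
        exact h1
      by_cases hp2' : 2 ∣ p'
      · have hc1' : c = -1 := by
          rcases hcc with h | h
          · exfalso
            rw [h, mul_one, neg_smul, ← sub_eq_add_neg] at hX'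
            exact EngelAux.down_not_mem_even hA hd hb hδ hδa hx' hp2' hX'
          · exact h
        exact ⟨fun heq => absurd heq (by omega), fun _ => hc1'⟩
      · have hc1' : c = 1 := by
          rcases hcc with h | h
          · exact h
          · exfalso
            rw [h, show (-(2 * b * (-1 : ℝ))) = 2 * b by ring] at hX'
            exact EngelAux.up_not_mem_odd hA hd hb hδ hδa hx' hp2' hX'
        exact ⟨fun _ => hc1', fun hne => absurd (by omega : (p - p') % 2 = 0) hne⟩
  refine ⟨⟨σ, fun s => ?_⟩, fun hpe => ?_, fun hpo => ?_⟩
  · rw [hB, hσ]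
    exact hf s
  · rw [hB, hBed, hpar.1 hpe, one_smul]
  · rw [hB, hBed, hpar.2 hpo, neg_one_smul]
end
end

section
/- Let d ≥ 2 and 0 < δ < a < b. Among all Engel sets X(A,a,b,δ) for sequences A sharing the same initial terms a₁,…,a_{d−1}, there are, up to isometry of ℝ^d, exactly two regular systems: those given by a_{i+d−1} = aᵢ for all i, and by a_{i+d−1} = −aᵢ for all i; and these two sets are not congruent to each other. -/
noncomputable section
open scoped Pointwise

/-! ### Basic coordinate lemmas -/

section Basics

variable {d : ℕ} {A : ℤ → ℤ} (hd : 2 ≤ d)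

lemma eVec_apply {k : ℕ} (hk : k ≤ d) (hd0 : 0 < d) (j : Fin d) :
    eVec d k j = if (j : ℕ) = k - 1 then 1 else 0 := by
  have h : k - 1 < d := by omega
  simp only [eVec, dif_pos h, EuclideanSpace.single_apply]
  congr 1
  simp [Fin.ext_iff]

lemma engelU_apply (hA : EngelSeq d A) (i : ℤ) (j : Fin d) :
    engelU d A i j =
      if (j : ℕ) = (A i).natAbs - 1 then (if 0 < A i then (1:ℝ) else -1) else 0 := by
  have h1 := (hA.1 i).1
  have h2 := (hA.1 i).2
  have hk : (A i).natAbs ≤ d := by omega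
  have : engelU d A i j = (if 0 < A i then (1:ℝ) else -1) * eVec d (A i).natAbs j := rfl
  rw [this, eVec_apply hk (by omega)]
  by_cases h : (j : ℕ) = (A i).natAbs - 1 <;> simp [h]

lemma engelU_last (hA : EngelSeq d A) (i : ℤ) (h : (2:ℕ) ≤ d) (j : Fin d)
    (hj : (j : ℕ) = d - 1) : engelU d A i j = 0 := by
  rw [engelU_apply hA]
  have h1 := (hA.1 i).1
  have h2 := (hA.1 i).2
  rw [if_neg]; omega

lemma engelU_ne_zero (hA : EngelSeq d A) (hd : 2 ≤ d) (i : ℤ) : engelU d A i ≠ 0 := by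
  intro h
  have h1 := (hA.1 i).1
  have h2 := (hA.1 i).2
  have hb : (A i).natAbs - 1 < d := by omega
  have h0 : engelU d A i ⟨(A i).natAbs - 1, hb⟩ = 0 := by rw [h]; rfl
  rw [engelU_apply hA] at h0
  simp only [if_pos rfl] at h0
  split_ifs at h0 <;> norm_num at h0

lemma engelU_norm (hA : EngelSeq d A) (i : ℤ) : ‖engelU d A i‖ = 1 := by
  have h1 := (hA.1 i).1
  have h2 := (hA.1 i).2
  have h : (A i).natAbs - 1 < d := by omega
  have he : eVec d (A i).natAbs = EuclideanSpace.single ⟨(A i).natAbs - 1, h⟩ (1:ℝ) := by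
    rw [eVec, dif_pos h]
  rw [engelU, he, norm_smul, EuclideanSpace.norm_single]
  split_ifs <;> norm_num

lemma abs_coord_le_norm (x : Euc d) (j : Fin d) : |x j| ≤ ‖x‖ := by
  have h := abs_real_inner_le_norm x (EuclideanSpace.single j (1:ℝ))
  rw [EuclideanSpace.inner_single_right] at h
  simpa [EuclideanSpace.norm_single] using h

end Basics

/-! ### Cumulative sums, grid, layers -/

section Structure

variable {d : ℕ} {A : ℤ → ℤ} {a b δ : ℝ}

lemma engelCum_zero : engelCum d A 0 = 0 := by
  simp [engelCum]

lemma engelCum_succ (i : ℤ) :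
    engelCum d A (i + 1) = engelCum d A i + engelU d A (i + 1) := by
  rcases le_or_gt 0 i with hi | hi
  · rw [engelCum, engelCum, if_pos (show (0:ℤ) ≤ i + 1 by omega), if_pos hi]
    have ht : (i+1).toNat = i.toNat + 1 := by omega
    rw [ht, Finset.sum_range_succ]
    have h2 : ((i.toNat : ℤ)) + 1 = i + 1 := by omega
    rw [h2]
  · rcases eq_or_lt_of_le (by omega : i + 1 ≤ 0) with h0 | h0
    · have : i = -1 := by omega
      subst this
      rw [engelCum, engelCum, if_pos (by norm_num : (0:ℤ) ≤ -1 + 1), if_neg (by norm_num : ¬ (0:ℤ) ≤ -1)]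
      norm_num [Finset.sum_range_succ]
    · rw [engelCum, engelCum, if_neg (show ¬ (0:ℤ) ≤ i + 1 by omega), if_neg (show ¬ (0:ℤ) ≤ i by omega)]
      rw [show (-i).toNat = (-(i+1)).toNat + 1 by omega, Finset.sum_range_succ]
      rw [show (-((-(i+1)).toNat : ℤ)) = i + 1 by omega]
      abel

lemma mem_grid_iff {x : Euc d} :
    x ∈ engelGrid d a ↔ ∀ j : Fin d, ((j : ℕ) < d - 1 → ∃ m : ℤ, x j = 2 * a * (m : ℝ)) ∧
        ((j : ℕ) = d - 1 → x j = 0) := Iff.rfl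

lemma grid_zero_mem : (0 : Euc d) ∈ engelGrid d a := by
  intro j
  exact ⟨fun _ => ⟨0, by simp [show (0:Euc d) j = 0 from rfl]⟩,
    fun _ => rfl⟩

lemma grid_add_mem {x y : Euc d} (hx : x ∈ engelGrid d a) (hy : y ∈ engelGrid d a) :
    x + y ∈ engelGrid d a := by
  intro j
  have hxj := hx j; have hyj := hy j
  constructor
  · intro hj
    obtain ⟨m, hm⟩ := hxj.1 hj
    obtain ⟨n, hn⟩ := hyj.1 hj
    exact ⟨m + n, by rw [show (x+y) j = x j + y j from rfl, hm, hn]; push_cast; ring⟩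
  · intro hj
    rw [show (x+y) j = x j + y j from rfl, hxj.2 hj, hyj.2 hj, add_zero]

lemma grid_neg_mem {x : Euc d} (hx : x ∈ engelGrid d a) : -x ∈ engelGrid d a := by
  intro j
  have hxj := hx j
  constructor
  · intro hj
    obtain ⟨m, hm⟩ := hxj.1 hj
    exact ⟨-m, by rw [show (-x) j = -(x j) from rfl, hm]; push_cast; ring⟩
  · intro hj
    rw [show (-x) j = -(x j) from rfl, hxj.2 hj, neg_zero]

lemma grid_sub_mem {x y : Euc d} (hx : x ∈ engelGrid d a) (hy : y ∈ engelGrid d a) :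
    x - y ∈ engelGrid d a := by
  rw [sub_eq_add_neg]; exact grid_add_mem hx (grid_neg_mem hy)

lemma grid_small (ha : 0 < a) {x : Euc d} (hx : x ∈ engelGrid d a)
    (h : ∀ j : Fin d, |x j| < 2 * a) : x = 0 := by
  ext j
  have hj := hx j
  have hjd := j.2
  rcases lt_or_eq_of_le (show (j : ℕ) ≤ d - 1 by omega) with hlt | heq
  · obtain ⟨m, hm⟩ := hj.1 hlt
    have hlt2 := h j
    rw [hm] at hlt2
    have hm0 : m = 0 := by
      by_contra hm0
      have h1 : (1:ℝ) ≤ |(m:ℝ)| := by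
        rw [← Int.cast_abs]
        exact_mod_cast Int.one_le_abs (by omega)
      have h2 : |2 * a * (m:ℝ)| = 2 * a * |(m:ℝ)| := by
        rw [abs_mul, abs_of_pos (by positivity : (0:ℝ) < 2 * a)]
      rw [h2] at hlt2
      nlinarith
    rw [hm, hm0]; norm_num
  · exact hj.2 heq

lemma eVec_d_apply (hd : 1 ≤ d) (j : Fin d) :
    eVec d d j = if (j : ℕ) = d - 1 then 1 else 0 := eVec_apply le_rfl (by omega) j

lemma engelCum_last (hA : EngelSeq d A) (hd : 2 ≤ d) (i : ℤ) (j : Fin d)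
    (hj : (j : ℕ) = d - 1) : engelCum d A i j = 0 := by
  rw [engelCum]
  split_ifs
  · rw [show ((∑ k ∈ Finset.range i.toNat, engelU d A ((k : ℤ) + 1)) : Euc d) j
        = ∑ k ∈ Finset.range i.toNat, engelU d A ((k : ℤ) + 1) j from by
      rw [WithLp.ofLp_sum, Finset.sum_apply]]
    exact Finset.sum_eq_zero fun k _ => engelU_last hA _ hd j hj
  · rw [show ((-∑ k ∈ Finset.range (-i).toNat, engelU d A (-(k : ℤ))) : Euc d) j
        = -∑ k ∈ Finset.range (-i).toNat, engelU d A (-(k : ℤ)) j from by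
      rw [show ((-∑ k ∈ Finset.range (-i).toNat, engelU d A (-(k : ℤ))) : Euc d) j
          = -((∑ k ∈ Finset.range (-i).toNat, engelU d A (-(k : ℤ))) j) from rfl,
        WithLp.ofLp_sum, Finset.sum_apply]]
    rw [Finset.sum_eq_zero fun k _ => engelU_last hA _ hd j hj, neg_zero]

lemma engelOffset_last (hA : EngelSeq d A) (hd : 2 ≤ d) (m : ℤ) (j : Fin d)
    (hj : (j : ℕ) = d - 1) : engelOffset d A b δ m j = 2 * b * m := by
  rw [engelOffset]
  rw [show (((2 * b) * (m : ℝ)) • eVec d d + δ • engelCum d A (m / 2)) j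
      = (2 * b * m) * eVec d d j + δ * engelCum d A (m / 2) j from rfl]
  rw [eVec_d_apply (by omega), if_pos hj, engelCum_last hA hd _ _ hj]
  ring

lemma mem_layer_iff {x : Euc d} {m : ℤ} :
    x ∈ engelLayer d A a b δ m ↔ x - engelOffset d A b δ m ∈ engelGrid d a := by
  rw [engelLayer, Set.mem_vadd_set_iff_neg_vadd_mem]
  constructor <;> intro h <;> convert h using 1
  · simp [vadd_eq_add]; abel
  · simp [vadd_eq_add]; abel

lemma layer_height (hA : EngelSeq d A) (hd : 2 ≤ d) {x : Euc d} {m : ℤ}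
    (hx : x ∈ engelLayer d A a b δ m) (j : Fin d) (hj : (j : ℕ) = d - 1) :
    x j = 2 * b * m := by
  rw [mem_layer_iff] at hx
  have := (hx j).2 hj
  rw [show (x - engelOffset d A b δ m) j = x j - engelOffset d A b δ m j from rfl] at this
  rw [engelOffset_last hA hd m j hj] at this
  linarith

lemma layer_unique (hA : EngelSeq d A) (hd : 2 ≤ d) (hb : 0 < b) {x : Euc d} {m m' : ℤ}
    (hx : x ∈ engelLayer d A a b δ m) (hx' : x ∈ engelLayer d A a b δ m') : m = m' := by
  have hj : ((⟨d - 1, by omega⟩ : Fin d) : ℕ) = d - 1 := rfl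
  have h1 := layer_height hA hd hx _ hj
  have h2 := layer_height hA hd hx' _ hj
  have hb' : (2 : ℝ) * b ≠ 0 := by positivity
  have h3 : (2*b) * (m:ℝ) = (2*b) * (m':ℝ) := by linarith
  have : (m : ℝ) = m' := mul_left_cancel₀ hb' h3
  exact_mod_cast this

lemma mem_engelSet_iff {x : Euc d} :
    x ∈ engelSet d A a b δ ↔ ∃ m : ℤ, x ∈ engelLayer d A a b δ m := Set.mem_iUnion

lemma offset_mem_layer {m : ℤ} : engelOffset d A b δ m ∈ engelLayer d A a b δ m := by
  rw [mem_layer_iff, sub_self]; exact grid_zero_mem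

lemma engelOffset_zero : engelOffset d A b δ 0 = 0 := by
  rw [engelOffset]
  norm_num [engelCum_zero]

end Structure

/-! ### Periodicity arithmetic -/

section Periodicity

variable {d : ℕ} {A : ℤ → ℤ}

/-- `natAbs ∘ A` is `(d-1)`-periodic in both directions. -/
lemma natAbs_shift (hA : EngelSeq d A) : ∀ n : ℤ, ∀ i : ℤ,
    (A (i + n * ((d:ℤ) - 1))).natAbs = (A i).natAbs := by
  intro n
  induction n using Int.induction_on with
  | zero => simp
  | succ k ih =>
    intro i
    have h := hA.2.1 (i + k * ((d:ℤ) - 1))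
    rw [show i + (k+1 : ℤ) * ((d:ℤ) - 1) = i + (k:ℤ) * ((d:ℤ)-1) + ((d:ℤ)-1) by ring]
    rw [h, ih i]
  | pred k ih =>
    intro i
    have h := hA.2.1 (i + (-(k:ℤ)-1) * ((d:ℤ) - 1))
    rw [show i + (-(k:ℤ)-1) * ((d:ℤ) - 1) + ((d:ℤ)-1) = i + (-(k:ℤ)) * ((d:ℤ)-1) by ring] at h
    rw [← h, ih i]

lemma exists_residue (hd : 2 ≤ d) (z : ℤ) :
    ∃ r : ℤ, 1 ≤ r ∧ r ≤ (d:ℤ) - 1 ∧ (∃ n : ℤ, z = r + n * ((d:ℤ)-1)) := by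
  have hD0 : ((d:ℤ) - 1) ≠ 0 := by omega
  have hDpos : (0:ℤ) < (d:ℤ) - 1 := by omega
  refine ⟨(z - 1) % ((d:ℤ)-1) + 1, ?_, ?_, ⟨(z-1)/((d:ℤ)-1), ?_⟩⟩
  · have := Int.emod_nonneg (z-1) hD0
    omega
  · have := Int.emod_lt_of_pos (z-1) hDpos
    omega
  · have h2 := Int.mul_ediv_add_emod (z-1) ((d:ℤ)-1)
    linarith

lemma natAbs_congr (hA : EngelSeq d A) {i r : ℤ} (n : ℤ) (h : i = r + n * ((d:ℤ)-1)) :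
    (A i).natAbs = (A r).natAbs := by
  rw [h, natAbs_shift hA]

/-- If two indices give the same `natAbs`, they are congruent mod `d-1`. -/
lemma natAbs_inj (hA : EngelSeq d A) (hd : 2 ≤ d) {i i' : ℤ}
    (h : (A i).natAbs = (A i').natAbs) : ∃ n : ℤ, i - i' = n * ((d:ℤ) - 1) := by
  obtain ⟨r, hr1, hr2, n, hn⟩ := exists_residue hd i
  obtain ⟨r', hr1', hr2', n', hn'⟩ := exists_residue hd i'
  have hr4 : (A r).natAbs = (A i).natAbs := (natAbs_congr hA n hn).symm
  have hr4' : (A r').natAbs = (A i').natAbs := (natAbs_congr hA n' hn').symm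
  have hrr : r = r' := by
    by_contra hne
    set G : Fin (d-1) → Fin (d-1) := fun x =>
      ⟨(A ((x:ℕ) + 1)).natAbs - 1, by
        have h1 := (hA.1 ((x:ℕ)+1)).1
        have h2 := (hA.1 ((x:ℕ)+1)).2
        omega⟩ with hG
    have hsurj : Function.Surjective G := by
      rintro ⟨s, hs⟩
      obtain ⟨iw, hiw1, hiw2, hiw3⟩ := hA.2.2 (s+1) (by omega) (by omega)
      refine ⟨⟨(iw - 1).toNat, by omega⟩, ?_⟩
      apply Fin.ext
      show (A (((iw - 1).toNat : ℤ) + 1)).natAbs - 1 = s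
      rw [show (((iw - 1).toNat : ℤ)) + 1 = iw by omega, hiw3]
      omega
    have hinj : Function.Injective G := (Finite.injective_iff_surjective).2 hsurj
    have e1 : G ⟨(r-1).toNat, by omega⟩ = G ⟨(r'-1).toNat, by omega⟩ := by
      apply Fin.ext
      show (A (((r-1).toNat : ℤ) + 1)).natAbs - 1 = (A (((r'-1).toNat : ℤ) + 1)).natAbs - 1
      rw [show (((r-1).toNat : ℤ)) + 1 = r by omega, show (((r'-1).toNat : ℤ)) + 1 = r' by omega,
        hr4, hr4', h]
    have := hinj e1
    rw [Fin.mk.injEq] at this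
    omega
  subst hrr
  exact ⟨n - n', by rw [hn, hn']; ring⟩

end Periodicity

/-! ### Signed permutation isometries -/

section SgnPerm

variable {d : ℕ}

def sgnPermIso (π : Equiv.Perm (Fin d)) (s : Fin d → ℝ) (hs : ∀ j, s j = 1 ∨ s j = -1) :
    Euc d ≃ᵢ Euc d where
  toEquiv :=
    { toFun := fun x => WithLp.toLp 2 (fun j => s j * x (π j) : Fin d → ℝ)
      invFun := fun y => WithLp.toLp 2 (fun k => s (π.symm k) * y (π.symm k) : Fin d → ℝ)
      left_inv := by
        intro x
        ext k
        show s (π.symm k) * (s (π.symm k) * x (π (π.symm k))) = x k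
        rw [Equiv.apply_symm_apply]
        rcases hs (π.symm k) with h | h <;> rw [h] <;> ring
      right_inv := by
        intro y
        ext j
        show s j * (s (π.symm (π j)) * y (π.symm (π j))) = y j
        rw [Equiv.symm_apply_apply]
        rcases hs j with h | h <;> rw [h] <;> ring }
  isometry_toFun := by
    apply Isometry.of_dist_eq
    intro x y
    rw [EuclideanSpace.dist_eq, EuclideanSpace.dist_eq]
    congr 1
    have : ∀ j : Fin d, dist (s j * x (π j)) (s j * y (π j)) ^ 2
        = dist (x (π j)) (y (π j)) ^ 2 := by
      intro j
      rw [Real.dist_eq, Real.dist_eq, ← abs_pow, ← abs_pow]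
      rcases hs j with h | h <;> rw [h] <;> ring_nf
    calc ∑ j : Fin d, dist ((fun j => s j * x (π j) : Fin d → ℝ) j)
          ((fun j => s j * y (π j) : Fin d → ℝ) j) ^ 2
        = ∑ j : Fin d, dist (x (π j)) (y (π j)) ^ 2 := by
          apply Finset.sum_congr rfl
          intro j _
          exact this j
      _ = ∑ i : Fin d, dist (x i) (y i) ^ 2 := Equiv.sum_comp π (fun i => dist (x i) (y i) ^ 2)

lemma sgnPermIso_apply (π : Equiv.Perm (Fin d)) (s : Fin d → ℝ) (hs) (x : Euc d) (j : Fin d) :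
    sgnPermIso π s hs x j = s j * x (π j) := rfl

lemma sgnPermIso_symm_apply (π : Equiv.Perm (Fin d)) (s : Fin d → ℝ) (hs) (y : Euc d) (k : Fin d) :
    (sgnPermIso π s hs).symm y k = s (π.symm k) * y (π.symm k) := rfl

lemma sgnPermIso_add (π : Equiv.Perm (Fin d)) (s : Fin d → ℝ) (hs) (x y : Euc d) :
    sgnPermIso π s hs (x + y) = sgnPermIso π s hs x + sgnPermIso π s hs y := by
  ext j
  show s j * ((x + y) (π j)) = s j * x (π j) + s j * y (π j)
  rw [show (x + y) (π j) = x (π j) + y (π j) from rfl]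
  ring

lemma sgnPermIso_symm_add (π : Equiv.Perm (Fin d)) (s : Fin d → ℝ) (hs) (x y : Euc d) :
    (sgnPermIso π s hs).symm (x + y)
      = (sgnPermIso π s hs).symm x + (sgnPermIso π s hs).symm y := by
  ext j
  show s (π.symm j) * ((x + y) (π.symm j)) = _
  rw [show (x + y) (π.symm j) = x (π.symm j) + y (π.symm j) from rfl]
  show _ = s (π.symm j) * x (π.symm j) + s (π.symm j) * y (π.symm j)
  ring

lemma sgnPermIso_grid {a : ℝ} (π : Equiv.Perm (Fin d)) (s : Fin d → ℝ) (hs)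
    (hπ : ∀ j : Fin d, (j : ℕ) = d - 1 → ((π j : Fin d) : ℕ) = d - 1)
    {x : Euc d} (hx : x ∈ engelGrid d a) : sgnPermIso π s hs x ∈ engelGrid d a := by
  intro j
  constructor
  · intro hj
    rw [sgnPermIso_apply]
    rcases lt_or_eq_of_le (show ((π j : Fin d) : ℕ) ≤ d - 1 from by have := (π j).2; omega)
      with hlt | heq
    · obtain ⟨z, hz⟩ := (hx (π j)).1 hlt
      rcases hs j with h | h
      · exact ⟨z, by rw [h, hz]; ring⟩
      · exact ⟨-z, by rw [h, hz]; push_cast; ring⟩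
    · exact ⟨0, by rw [(hx (π j)).2 heq]; norm_num⟩
  · intro hj
    rw [sgnPermIso_apply, (hx (π j)).2 (hπ j hj), mul_zero]

end SgnPerm

/-! ### Shifting the `u` sequence by periods -/

section UShift

variable {d : ℕ} {A : ℤ → ℤ} {ε : ℝ}

lemma u_shift (hε : ε = 1 ∨ ε = -1)
    (hper : ∀ i : ℤ, engelU d A (i + ((d:ℤ) - 1)) = ε • engelU d A i) :
    ∀ n : ℤ, ∀ i : ℤ, engelU d A (i + n * ((d:ℤ)-1))
      = (if Even n then (1:ℝ) else ε) • engelU d A i := by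
  have hper' : ∀ i : ℤ, engelU d A (i - ((d:ℤ) - 1)) = ε • engelU d A i := by
    intro i
    have h := hper (i - ((d:ℤ)-1))
    rw [sub_add_cancel] at h
    rw [h, smul_smul]
    rcases hε with h1 | h1 <;> rw [h1] <;> norm_num
  have aux : ∀ n : ℤ, (if Even (n+1) then (1:ℝ) else ε) = ε * (if Even n then 1 else ε) := by
    intro n
    by_cases h : Even n
    · rw [if_pos h, if_neg (by simp [Int.even_add_one, h]), mul_one]
    · rw [if_neg h, if_pos (by simpa [Int.even_add_one] using h)]
      rcases hε with h1 | h1 <;> rw [h1] <;> norm_num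
  have aux' : ∀ n : ℤ, (if Even (n-1) then (1:ℝ) else ε) = ε * (if Even n then 1 else ε) := by
    intro n
    have h2 := aux (n-1)
    rw [sub_add_cancel] at h2
    rw [h2, ← mul_assoc]
    rcases hε with h1 | h1 <;> rw [h1] <;> norm_num
  intro n
  induction n using Int.induction_on with
  | zero => intro i; norm_num
  | succ k ih =>
    intro i
    rw [show i + ((k:ℤ)+1) * ((d:ℤ)-1) = (i + (k:ℤ) * ((d:ℤ)-1)) + ((d:ℤ)-1) by ring,
      hper, ih, smul_smul]
    congr 1
    exact (aux (k:ℤ)).symm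
  | pred k ih =>
    intro i
    rw [show i + (-(k:ℤ)-1) * ((d:ℤ)-1) = (i + (-(k:ℤ)) * ((d:ℤ)-1)) - ((d:ℤ)-1) by ring,
      hper', ih, smul_smul]
    congr 1
    exact (aux' (-(k:ℤ))).symm

/-- transporting `u` along a congruence mod `d-1`, simultaneously at two places. -/
lemma u_congr (hε : ε = 1 ∨ ε = -1)
    (hper : ∀ i : ℤ, engelU d A (i + ((d:ℤ) - 1)) = ε • engelU d A i)
    {i i' : ℤ} (n : ℤ) (h : i' = i + n * ((d:ℤ)-1)) (M : ℤ) :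
    ∃ c : ℝ, (c = 1 ∨ c = -1) ∧ engelU d A i' = c • engelU d A i ∧
      engelU d A (M - i) = c • engelU d A (M - i') := by
  refine ⟨if Even n then (1:ℝ) else ε, ?_, ?_, ?_⟩
  · split_ifs
    · left; rfl
    · exact hε
  · rw [h, u_shift hε hper]
  · have : M - i = (M - i') + n * ((d:ℤ)-1) := by omega
    rw [this, u_shift hε hper]

end UShift

/-! ### More signed-permutation lemmas -/

section SgnPerm2

variable {d : ℕ}

lemma sgnPermIso_smul (π : Equiv.Perm (Fin d)) (s : Fin d → ℝ) (hs) (r : ℝ) (x : Euc d) :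
    sgnPermIso π s hs (r • x) = r • sgnPermIso π s hs x := by
  ext j
  show s j * ((r • x) (π j)) = r • (s j * x (π j))
  rw [show (r • x) (π j) = r * x (π j) from rfl]
  show s j * (r * x (π j)) = r * (s j * x (π j))
  ring

lemma sgnPermIso_zero (π : Equiv.Perm (Fin d)) (s : Fin d → ℝ) (hs) :
    sgnPermIso π s hs 0 = 0 := by
  ext j
  show s j * ((0 : Euc d) (π j)) = (0 : Euc d) j
  rw [show ((0 : Euc d)) (π j) = 0 from rfl, mul_zero]
  rfl

lemma sgnPermIso_sub (π : Equiv.Perm (Fin d)) (s : Fin d → ℝ) (hs) (x y : Euc d) :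
    sgnPermIso π s hs (x - y) = sgnPermIso π s hs x - sgnPermIso π s hs y := by
  ext j
  show s j * ((x - y) (π j)) = _
  rw [show (x - y) (π j) = x (π j) - y (π j) from rfl]
  show _ = s j * x (π j) - s j * y (π j)
  ring

lemma sgnPermIso_symm_eq (π : Equiv.Perm (Fin d)) (s : Fin d → ℝ) (hs) :
    (sgnPermIso π s hs).symm
      = sgnPermIso π.symm (fun k => s (π.symm k)) (fun k => hs (π.symm k)) := by
  apply IsometryEquiv.ext
  intro y
  ext k
  rfl

end SgnPerm2

/-! ### The reflection symmetries of an Engel set -/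

section Reflection

variable {d : ℕ} {A : ℤ → ℤ} {ε : ℝ} {a b δ : ℝ}

lemma exists_reflection (hd : 2 ≤ d) (hA : EngelSeq d A) (hε : ε = 1 ∨ ε = -1)
    (hper : ∀ i : ℤ, engelU d A (i + ((d:ℤ) - 1)) = ε • engelU d A i) (m : ℤ) :
    ∃ g : Euc d ≃ᵢ Euc d, (g '' engelSet d A a b δ = engelSet d A a b δ) ∧
      (∀ n : ℤ, ∀ x ∈ engelLayer d A a b δ n, g x ∈ engelLayer d A a b δ (2*m+1-n)) := by
  classical
  -- choose representatives of each coordinate value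
  have hch : ∀ j : Fin d, ∃ i' : ℤ, 1 ≤ i' ∧ i' ≤ (d:ℤ) - 1 ∧
      ((j:ℕ) < d - 1 → (A i').natAbs = (j:ℕ)+1) := by
    intro j
    by_cases hj : (j:ℕ) < d - 1
    · obtain ⟨i', h1, h2, h3⟩ := hA.2.2 ((j:ℕ)+1) (by omega) (by omega)
      exact ⟨i', h1, h2, fun _ => h3⟩
    · exact ⟨1, le_refl 1, by omega, fun h => absurd h hj⟩
  choose I hI1 hI2 hI3 using hch
  set σ : ℤ → ℝ := fun i => if 0 < A i then 1 else -1 with hσdef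
  have hσ : ∀ z : ℤ, σ z = 1 ∨ σ z = -1 := by
    intro z; by_cases h : 0 < A z
    · left; simp [hσdef, h]
    · right; simp [hσdef, h]
  -- the permutation
  have hbound : ∀ z : ℤ, (A z).natAbs - 1 < d := by
    intro z
    have := (hA.1 z).2
    omega
  set τf : Fin d → Fin d := fun j =>
    if hj : (j:ℕ) < d - 1 then ⟨(A (m + 1 - I j)).natAbs - 1, hbound _⟩ else j with hτdef
  have hτlt : ∀ j : Fin d, (j:ℕ) < d - 1 → ((τf j : Fin d) : ℕ) < d - 1 := by
    intro j hj
    have h1 := (hA.1 (m + 1 - I j)).1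
    have h2 := (hA.1 (m + 1 - I j)).2
    simp only [hτdef, dif_pos hj]
    omega
  have hτval : ∀ j : Fin d, (hj : (j:ℕ) < d - 1) →
      ((τf j : Fin d) : ℕ) = (A (m + 1 - I j)).natAbs - 1 := by
    intro j hj
    simp only [hτdef, dif_pos hj]
  have hτlast : ∀ j : Fin d, ¬ ((j:ℕ) < d - 1) → τf j = j := by
    intro j hj
    simp only [hτdef, dif_neg hj]
  have hinj : Function.Injective τf := by
    intro j j' h
    by_cases hj : (j:ℕ) < d - 1 <;> by_cases hj' : (j':ℕ) < d - 1
    · have hv : (A (m + 1 - I j)).natAbs = (A (m + 1 - I j')).natAbs := by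
        have e1 := hτval j hj
        have e2 := hτval j' hj'
        have h1 := (hA.1 (m + 1 - I j)).1
        have h2 := (hA.1 (m + 1 - I j')).1
        rw [h] at e1
        omega
      obtain ⟨n, hn⟩ := natAbs_inj hA hd hv
      have hIj : I j = I j' := by
        have b1 := hI1 j; have b2 := hI2 j; have b3 := hI1 j'; have b4 := hI2 j'
        have hd2 : (2:ℤ) ≤ (d:ℤ) := by exact_mod_cast hd
        have key : I j' - I j = n * ((d:ℤ)-1) := by linarith [hn]
        rcases lt_trichotomy n 0 with h0 | h0 | h0
        · have h1 : n ≤ -1 := by omega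
          have h2 : n * ((d:ℤ)-1) ≤ (-1) * ((d:ℤ)-1) :=
            mul_le_mul_of_nonneg_right h1 (by omega)
          linarith
        · subst h0; linarith
        · have h1 : (1:ℤ) ≤ n := by omega
          have h2 : (1:ℤ) * ((d:ℤ)-1) ≤ n * ((d:ℤ)-1) :=
            mul_le_mul_of_nonneg_right h1 (by omega)
          linarith
      have : ((j:ℕ)+1) = ((j':ℕ)+1) := by
        rw [← hI3 j hj, ← hI3 j' hj', hIj]
      exact Fin.ext (by omega)
    · exfalso
      have := hτlt j hj
      rw [h, hτlast j' hj'] at this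
      omega
    · exfalso
      have := hτlt j' hj'
      rw [← h, hτlast j hj] at this
      omega
    · rw [hτlast j hj, hτlast j' hj'] at h
      exact h
  set πm : Equiv.Perm (Fin d) := Equiv.ofBijective τf (Finite.injective_iff_bijective.1 hinj)
    with hπdef
  have hπapp : ∀ j, πm j = τf j := fun j => rfl
  have hπlast : ∀ j : Fin d, (j : ℕ) = d - 1 → ((πm j : Fin d) : ℕ) = d - 1 := by
    intro j hj
    rw [hπapp, hτlast j (by omega), hj]
  -- the signs
  set sf : Fin d → ℝ := fun j =>
    if (j:ℕ) < d - 1 then -(σ (m + 1 - I j) * σ (I j)) else -1 with hsfdef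
  have hsf : ∀ j, sf j = 1 ∨ sf j = -1 := by
    intro j
    simp only [hsfdef]
    split_ifs
    · rcases hσ (m + 1 - I j) with h1 | h1 <;> rcases hσ (I j) with h2 | h2 <;>
        rw [h1, h2] <;> norm_num
    · right; rfl
  set R : Euc d ≃ᵢ Euc d := sgnPermIso πm sf hsf with hRdef
  -- the key identity
  have hUapp : ∀ (i : ℤ) (j : Fin d),
      engelU d A i j = if (j:ℕ) = (A i).natAbs - 1 then σ i else 0 := by
    intro i j
    rw [engelU_apply hA]
  have KEY : ∀ i : ℤ, R (engelU d A i) = -engelU d A (m + 1 - i) := by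
    intro i
    ext j
    show sf j * (engelU d A i) (πm j) = -(engelU d A (m + 1 - i) j)
    by_cases hj : (j:ℕ) < d - 1
    · rw [hπapp]
      by_cases hc : (A (m + 1 - I j)).natAbs = (A i).natAbs
      · obtain ⟨n, hn⟩ := natAbs_inj hA hd hc
        obtain ⟨c, hc1, hc2, hc3⟩ := u_congr hε hper n
          (show m + 1 - I j = i + n * ((d:ℤ)-1) by omega) (m+1)
        -- σ (m+1-I j) = c * σ i
        have e1 : σ (m + 1 - I j) = c * σ i := by
          have h1 := (hA.1 (m + 1 - I j)).1
          have h2 := (hA.1 i).1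
          have e0 : engelU d A (m+1-I j) ⟨(A (m + 1 - I j)).natAbs - 1, hbound _⟩
              = c * engelU d A i ⟨(A (m + 1 - I j)).natAbs - 1, hbound _⟩ := by
            rw [hc2]; rfl
          rw [hUapp, hUapp, if_pos rfl,
            if_pos (show (((⟨(A (m + 1 - I j)).natAbs - 1, hbound _⟩ : Fin d)) : ℕ)
              = (A i).natAbs - 1 by show (A (m+1-I j)).natAbs - 1 = (A i).natAbs - 1; omega)] at e0
          exact e0
        -- engelU (m+1-i) j = c * σ (I j)
        have e2 : engelU d A (m + 1 - i) j = c * σ (I j) := by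
          have hrw : (m:ℤ) + 1 - (m + 1 - I j) = I j := by ring
          rw [hrw] at hc3
          have e0 : engelU d A (m+1-i) j = c * engelU d A (I j) j := by
            rw [hc3]; rfl
          rw [e0, hUapp, if_pos (by have := hI3 j hj; omega)]
        rw [e2, hUapp, if_pos (by rw [hτval j hj]; omega)]
        simp only [hsfdef, if_pos hj]
        rw [e1]
        rcases hσ i with h1 | h1 <;> rw [h1] <;> ring
      · -- off-support: both sides vanish
        have hL : engelU d A i (τf j) = 0 := by
          rw [hUapp, if_neg]
          rw [hτval j hj]
          have h1 := (hA.1 (m + 1 - I j)).1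
          have h2 := (hA.1 i).1
          omega
        have hR : engelU d A (m + 1 - i) j = 0 := by
          rw [hUapp, if_neg]
          intro hcontra
          have h1 := (hA.1 (m + 1 - i)).1
          have h2 := hI3 j hj
          have hv : (A (m + 1 - i)).natAbs = (A (I j)).natAbs := by omega
          obtain ⟨n, hn⟩ := natAbs_inj hA hd hv
          have : (A (m + 1 - I j)).natAbs = (A i).natAbs :=
            natAbs_congr hA n (by omega)
          exact hc this
        rw [hL, hR, mul_zero, neg_zero]
    · have hjl : (j:ℕ) = d - 1 := by have := j.2; omega
      rw [hπapp, hτlast j hj]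
      rw [engelU_last hA i hd j hjl, engelU_last hA (m+1-i) hd j hjl, mul_zero, neg_zero]
  -- linearity helpers for R
  have hRadd : ∀ x y : Euc d, R (x + y) = R x + R y := fun x y => by
    rw [hRdef]; exact sgnPermIso_add _ _ _ _ _
  have hRsub : ∀ x y : Euc d, R (x - y) = R x - R y := fun x y => by
    rw [hRdef]; exact sgnPermIso_sub _ _ _ _ _
  have hRsmul : ∀ (r : ℝ) (x : Euc d), R (r • x) = r • R x := fun r x => by
    rw [hRdef]; exact sgnPermIso_smul _ _ _ _ _
  have hRzero : R 0 = 0 := by rw [hRdef]; exact sgnPermIso_zero _ _ _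
  -- R maps the vertical direction to its negative
  have hReD : R (eVec d d) = -(eVec d d) := by
    ext j
    show sf j * (eVec d d) (πm j) = -((eVec d d) j)
    rw [hπapp]
    by_cases hj : (j:ℕ) < d - 1
    · rw [eVec_d_apply (by omega), if_neg (by have := hτlt j hj; omega),
        eVec_d_apply (by omega) j, if_neg (by omega), mul_zero, neg_zero]
    · rw [hτlast j hj, eVec_d_apply (by omega), if_pos (by have := j.2; omega)]
      simp only [hsfdef, if_neg hj]
      norm_num
  -- R on cumulative sums
  have hRcum : ∀ i : ℤ, R (engelCum d A i) = engelCum d A (m - i) - engelCum d A m := by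
    intro i
    induction i using Int.induction_on with
    | zero => rw [engelCum_zero, hRzero, show m - (0:ℤ) = m by ring, sub_self]
    | succ k ih =>
      have hstep := engelCum_succ (A := A) (d := d) (m - ((k:ℤ)+1))
      rw [show m - ((k:ℤ)+1) + 1 = m - k by ring] at hstep
      rw [engelCum_succ (k:ℤ), hRadd, ih, KEY, show m+1-((k:ℤ)+1) = m - k by ring, hstep]
      abel
    | pred k ih =>
      have hstep := engelCum_succ (A := A) (d := d) (m + (k:ℤ))
      have hstep2 := engelCum_succ (A := A) (d := d) (-(k:ℤ)-1)
      rw [show (-(k:ℤ)-1) + 1 = -(k:ℤ) by ring] at hstep2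
      have : engelCum d A (-(k:ℤ)-1) = engelCum d A (-(k:ℤ)) - engelU d A (-(k:ℤ)) := by
        rw [hstep2]; abel
      rw [this, hRsub, ih, KEY,
        show m - (-(k:ℤ)) = m + k by ring, show m+1 - (-(k:ℤ)) = m + k + 1 by ring,
        show m - (-(k:ℤ)-1) = m + k + 1 by ring, hstep]
      abel
  -- the translation part and the full isometry
  set c₀ : Euc d := ((2*b) * (((2*m+1 : ℤ)):ℝ)) • eVec d d + δ • engelCum d A m with hc₀
  set T : Euc d ≃ᵢ Euc d := IsometryEquiv.constVAdd c₀ with hT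
  set g : Euc d ≃ᵢ Euc d := R.trans T with hg
  have hgapp : ∀ x : Euc d, g x = c₀ + R x := fun x => rfl
  have hgsymm : ∀ y : Euc d, g.symm y = R.symm (-c₀ + y) := fun y => rfl
  -- action on offsets
  have Hoff : ∀ n : ℤ, R (engelOffset d A b δ n) + c₀ = engelOffset d A b δ (2*m+1-n) := by
    intro n
    rw [engelOffset, engelOffset, hRadd, hRsmul, hRsmul, hReD, hRcum,
      show (2*m+1-n)/2 = m - n/2 from by omega, hc₀]
    have hcast : (((2*m+1-n : ℤ)):ℝ) = 2*(m:ℝ) + 1 - (n:ℝ) := by push_cast; ring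
    have hcast2 : (((2*m+1 : ℤ)):ℝ) = 2*(m:ℝ) + 1 := by push_cast; ring
    rw [hcast, hcast2]
    module
  -- R.symm helpers
  have hRsymm_sub : ∀ x y : Euc d, R.symm (x - y) = R.symm x - R.symm y := fun x y => by
    rw [hRdef, sgnPermIso_symm_eq]; exact sgnPermIso_sub _ _ _ _ _
  have hπsymm_last : ∀ j : Fin d, (j : ℕ) = d - 1 → ((πm.symm j : Fin d) : ℕ) = d - 1 := by
    intro j hj
    have hlast : πm ⟨d-1, by omega⟩ = ⟨d-1, by omega⟩ := Fin.ext (hπlast ⟨d-1, by omega⟩ rfl)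
    have hjj : j = ⟨d-1, by omega⟩ := Fin.ext hj
    rw [hjj, ← hlast, Equiv.symm_apply_apply]
  -- forward layer mapping
  have hfwd : ∀ n : ℤ, ∀ x ∈ engelLayer d A a b δ n, g x ∈ engelLayer d A a b δ (2*m+1-n) := by
    intro n x hx
    rw [mem_layer_iff] at hx ⊢
    have : g x - engelOffset d A b δ (2*m+1-n) = R (x - engelOffset d A b δ n) := by
      rw [hgapp, ← Hoff n, hRsub]
      abel
    rw [this, hRdef]
    exact sgnPermIso_grid _ _ _ hπlast hx
  refine ⟨g, ?_, hfwd⟩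
  -- image equality
  apply Set.Subset.antisymm
  · rintro y ⟨x, hx, rfl⟩
    obtain ⟨n, hn⟩ := mem_engelSet_iff.1 hx
    exact mem_engelSet_iff.2 ⟨2*m+1-n, hfwd n x hn⟩
  · intro y hy
    obtain ⟨n, hn⟩ := mem_engelSet_iff.1 hy
    refine ⟨g.symm y, ?_, g.apply_symm_apply y⟩
    apply mem_engelSet_iff.2 ⟨2*m+1-n, ?_⟩
    rw [mem_layer_iff] at hn ⊢
    have hoff2 : engelOffset d A b δ (2*m+1-n) = R.symm (engelOffset d A b δ n - c₀) := by
      have := Hoff (2*m+1-n)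
      rw [show 2*m+1-(2*m+1-n) = n by ring] at this
      rw [← this]
      rw [show R (engelOffset d A b δ (2*m+1-n)) + c₀ - c₀
          = R (engelOffset d A b δ (2*m+1-n)) by abel, IsometryEquiv.symm_apply_apply]
    have : g.symm y - engelOffset d A b δ (2*m+1-n) = R.symm (y - engelOffset d A b δ n) := by
      rw [hgsymm, hoff2, ← hRsymm_sub]
      congr 1
      abel
    rw [this, hRdef, sgnPermIso_symm_eq]
    exact sgnPermIso_grid _ _ _ hπsymm_last hn

end Reflection

/-! ### Grid translations and regularity -/

section Regular

variable {d : ℕ} {A : ℤ → ℤ} {ε : ℝ} {a b δ : ℝ}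





lemma grid_translate {v : Euc d} (hv : v ∈ engelGrid d a) :
    (IsometryEquiv.constVAdd v : Euc d ≃ᵢ Euc d) '' engelSet d A a b δ
      = engelSet d A a b δ := by
  apply Set.Subset.antisymm
  · rintro y ⟨x, hx, rfl⟩
    obtain ⟨n, hn⟩ := mem_engelSet_iff.1 hx
    apply mem_engelSet_iff.2 ⟨n, ?_⟩
    rw [mem_layer_iff] at hn ⊢
    have : ((IsometryEquiv.constVAdd v : Euc d ≃ᵢ Euc d) x) - engelOffset d A b δ n
        = (x - engelOffset d A b δ n) + v := by
      rw [show (IsometryEquiv.constVAdd v : Euc d ≃ᵢ Euc d) x = v + x from rfl]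
      abel
    rw [this]
    exact grid_add_mem hn hv
  · intro y hy
    obtain ⟨n, hn⟩ := mem_engelSet_iff.1 hy
    refine ⟨-v + y, ?_, by rw [show (IsometryEquiv.constVAdd v : Euc d ≃ᵢ Euc d) (-v + y)
      = v + (-v + y) from rfl]; abel⟩
    apply mem_engelSet_iff.2 ⟨n, ?_⟩
    rw [mem_layer_iff] at hn ⊢
    have : (-v + y) - engelOffset d A b δ n = (y - engelOffset d A b δ n) - v := by abel
    rw [this]
    exact grid_sub_mem hn hv

theorem engel_regular (hd : 2 ≤ d) (hA : EngelSeq d A) (hε : ε = 1 ∨ ε = -1)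
    (hper : ∀ i : ℤ, engelU d A (i + ((d:ℤ) - 1)) = ε • engelU d A i) :
    IsRegularSystem (engelSet d A a b δ) := by
  intro x hx y hy
  obtain ⟨n₁, hn₁⟩ := mem_engelSet_iff.1 hx
  obtain ⟨n₂, hn₂⟩ := mem_engelSet_iff.1 hy
  -- a composition of reflections carrying layer n₁ to layer n₂
  have main : ∃ g : Euc d ≃ᵢ Euc d, g '' engelSet d A a b δ = engelSet d A a b δ ∧
      g x ∈ engelLayer d A a b δ n₂ := by
    rcases Int.even_or_odd (n₂ - n₁) with ⟨k, hk⟩ | ⟨k, hk⟩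
    · -- even difference: two reflections
      obtain ⟨g₁, hg₁, hl₁⟩ := exists_reflection (a := a) (b := b) (δ := δ) hd hA hε hper 0
      obtain ⟨g₂, hg₂, hl₂⟩ := exists_reflection (a := a) (b := b) (δ := δ) hd hA hε hper k
      refine ⟨g₁.trans g₂, ?_, ?_⟩
      · calc ⇑(g₁.trans g₂) '' engelSet d A a b δ
            = ⇑g₂ '' (⇑g₁ '' engelSet d A a b δ) := Set.image_comp ⇑g₂ ⇑g₁ (engelSet d A a b δ)
          _ = engelSet d A a b δ := by rw [hg₁, hg₂]
      · rw [IsometryEquiv.trans_apply]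
        have h2 := hl₂ (2*0+1-n₁) (g₁ x) (hl₁ n₁ x hn₁)
        rw [show 2*k+1-(2*0+1-n₁) = n₂ by omega] at h2
        exact h2
    · -- odd difference: one reflection
      obtain ⟨g₁, hg₁, hl₁⟩ := exists_reflection (a := a) (b := b) (δ := δ) hd hA hε hper (k + n₁)
      refine ⟨g₁, hg₁, ?_⟩
      have h1 := hl₁ n₁ x hn₁
      rw [show 2*(k+n₁)+1-n₁ = n₂ by omega] at h1
      exact h1
  obtain ⟨g, hgX, hgx⟩ := main
  have hv : y - g x ∈ engelGrid d a := by
    rw [mem_layer_iff] at hn₂ hgx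
    have he : y - g x = (y - engelOffset d A b δ n₂) - (g x - engelOffset d A b δ n₂) := by abel
    rw [he]
    exact grid_sub_mem hn₂ hgx
  refine ⟨g.trans (IsometryEquiv.constVAdd (y - g x)), ?_, ?_⟩
  · calc ⇑(g.trans (IsometryEquiv.constVAdd (y - g x))) '' engelSet d A a b δ
        = ⇑(IsometryEquiv.constVAdd (y - g x) : Euc d ≃ᵢ Euc d) ''
            (⇑g '' engelSet d A a b δ) :=
          Set.image_comp ⇑(IsometryEquiv.constVAdd (y - g x) : Euc d ≃ᵢ Euc d) ⇑g
            (engelSet d A a b δ)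
      _ = engelSet d A a b δ := by rw [hgX, grid_translate hv]
  · rw [show (g.trans (IsometryEquiv.constVAdd (y - g x))) x
      = (y - g x) + g x from rfl]
    abel
end Regular

/-! ### Distance structure of Engel sets -/

section DistStruct

variable {d : ℕ} {A : ℤ → ℤ} {a b δ : ℝ}

lemma sum_sq_eq_one {z : Fin d → ℤ} (h : ∑ j, z j ^ 2 = 1) :
    ∃ j₀ : Fin d, (z j₀ = 1 ∨ z j₀ = -1) ∧ ∀ k, k ≠ j₀ → z k = 0 := by
  have hex : ∃ j₀, z j₀ ≠ 0 := by
    by_contra hc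
    push_neg at hc
    rw [Finset.sum_eq_zero (fun j _ => by rw [hc j]; ring)] at h
    exact one_ne_zero h.symm
  obtain ⟨j₀, hj₀⟩ := hex
  have hsplit : ∑ j, z j ^ 2 = z j₀ ^ 2 + ∑ k ∈ Finset.univ.erase j₀, z k ^ 2 :=
    (Finset.add_sum_erase Finset.univ (fun k => z k ^ 2) (Finset.mem_univ j₀)).symm
  have h1 : 1 ≤ z j₀ ^ 2 := by
    have h2 := Int.one_le_abs hj₀
    have h3 : (1:ℤ) * 1 ≤ |z j₀| * |z j₀| := mul_le_mul h2 h2 (by norm_num) (abs_nonneg _)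
    nlinarith [sq_abs (z j₀)]
  have hnn : ∀ k ∈ Finset.univ.erase j₀, 0 ≤ z k ^ 2 := fun k _ => sq_nonneg _
  have hrest : ∑ k ∈ Finset.univ.erase j₀, z k ^ 2 = 0 := by
    have := Finset.sum_nonneg hnn
    omega
  have hz0 : ∀ k ∈ Finset.univ.erase j₀, z k ^ 2 = 0 :=
    (Finset.sum_eq_zero_iff_of_nonneg hnn).1 hrest
  have hsq1 : z j₀ ^ 2 = 1 := by omega
  refine ⟨j₀, ?_, ?_⟩
  · have h2 : (z j₀ - 1) * (z j₀ + 1) = 0 := by linear_combination hsq1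
    rcases mul_eq_zero.1 h2 with h3 | h3
    · left; omega
    · right; omega
  · intro k hk
    have := hz0 k (Finset.mem_erase.2 ⟨hk, Finset.mem_univ k⟩)
    exact pow_eq_zero_iff (by norm_num) |>.1 this

lemma grid_norm_2a (ha : 0 < a) {v : Euc d} (hv : v ∈ engelGrid d a) (hn : ‖v‖ = 2 * a) :
    ∃ j : Fin d, (j : ℕ) < d - 1 ∧
      (v = EuclideanSpace.single j (2*a) ∨ v = -EuclideanSpace.single j (2*a)) := by
  classical
  have hz : ∀ j : Fin d, ∃ z : ℤ, v j = 2 * a * (z : ℝ) := by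
    intro j
    have hjd := j.2
    rcases lt_or_eq_of_le (show (j:ℕ) ≤ d - 1 by omega) with hlt | heq
    · exact (hv j).1 hlt
    · exact ⟨0, by rw [(hv j).2 heq]; norm_num⟩
  choose z hzv using hz
  have hlast : ∀ j : Fin d, (j:ℕ) = d - 1 → z j = 0 := by
    intro j hj
    have h0 := (hv j).2 hj
    have := hzv j
    rw [h0] at this
    have ha' : 2 * a ≠ 0 := by positivity
    have hz0 : (2*a) * ((z j : ℝ)) = 0 := by rw [← hzv j]; exact h0
    have : ((z j : ℝ)) = 0 := by
      rcases mul_eq_zero.1 hz0 with h' | h'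
      · exact absurd h' ha'
      · exact h'
    exact_mod_cast this
  have hsum : ∑ j, (z j : ℝ) ^ 2 = 1 := by
    have hnsq : ‖v‖ ^ 2 = ∑ j, ‖v j‖ ^ 2 := by
      rw [EuclideanSpace.norm_eq]
      rw [Real.sq_sqrt (Finset.sum_nonneg fun j _ => sq_nonneg _)]
    rw [hn] at hnsq
    have : ∑ j, ‖v j‖ ^ 2 = (4 * a^2) * ∑ j, (z j : ℝ)^2 := by
      rw [Finset.mul_sum]
      apply Finset.sum_congr rfl
      intro j _
      rw [hzv j, Real.norm_eq_abs, sq_abs]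
      ring
    rw [this] at hnsq
    have ha4 : (0:ℝ) < 4 * a^2 := by positivity
    have hmul : (4*a^2) * (∑ j, (z j : ℝ)^2) = (4*a^2) * 1 := by
      rw [mul_one]; linarith [hnsq]
    exact mul_left_cancel₀ (ne_of_gt ha4) hmul
  have hsumz : ∑ j, z j ^ 2 = 1 := by
    have : ((∑ j, z j ^ 2 : ℤ) : ℝ) = 1 := by push_cast; rw [hsum]
    exact_mod_cast this
  obtain ⟨j₀, hj₀, hrest⟩ := sum_sq_eq_one hsumz
  have hj₀lt : (j₀ : ℕ) < d - 1 := by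
    by_contra hc
    have : (j₀ : ℕ) = d - 1 := by have := j₀.2; omega
    have := hlast j₀ this
    omega
  refine ⟨j₀, hj₀lt, ?_⟩
  rcases hj₀ with h1 | h1
  · left
    ext k
    rw [show (EuclideanSpace.single j₀ (2*a) : Euc d) k = if k = j₀ then 2*a else 0 from
      EuclideanSpace.single_apply j₀ (2*a) k]
    by_cases hk : k = j₀
    · rw [if_pos hk, hk, hzv, h1]; norm_num
    · rw [if_neg hk, hzv, hrest k hk]; norm_num
  · right
    ext k
    have e1 : (-EuclideanSpace.single j₀ (2*a) : Euc d) k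
        = -((EuclideanSpace.single j₀ (2*a) : Euc d) k) := rfl
    rw [e1, EuclideanSpace.single_apply]
    by_cases hk : k = j₀
    · rw [if_pos hk, hk, hzv, h1]; norm_num
    · rw [if_neg hk, hzv, hrest k hk]; norm_num

/-- two points of an Engel set at distance exactly 2a differ by `±2a e_j`. -/
lemma dist_2a_struct (hA : EngelSeq d A) (hd : 2 ≤ d) (ha : 0 < a) (hb : 0 < b) (hab : a < b)
    {p p' : Euc d} (hp : p ∈ engelSet d A a b δ) (hp' : p' ∈ engelSet d A a b δ)
    (hdist : dist p p' = 2 * a) :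
    ∃ j : Fin d, (j : ℕ) < d - 1 ∧
      (p - p' = EuclideanSpace.single j (2*a) ∨ p - p' = -EuclideanSpace.single j (2*a)) := by
  obtain ⟨m, hm⟩ := mem_engelSet_iff.1 hp
  obtain ⟨m', hm'⟩ := mem_engelSet_iff.1 hp'
  have hlastd : ((⟨d-1, by omega⟩ : Fin d) : ℕ) = d - 1 := rfl
  have hmm : m = m' := by
    by_contra hne
    have h1 := layer_height hA hd hm _ hlastd
    have h2 := layer_height hA hd hm' _ hlastd
    have hcoord : |p ⟨d-1, by omega⟩ - p' ⟨d-1, by omega⟩| ≤ dist p p' := by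
      rw [dist_eq_norm]
      exact abs_coord_le_norm (p - p') _
    rw [h1, h2, hdist] at hcoord
    have hrw : 2 * b * (m:ℝ) - 2 * b * (m':ℝ) = (2*b) * ((m:ℝ) - (m':ℝ)) := by ring
    rw [hrw, abs_mul, abs_of_pos (show (0:ℝ) < 2*b by positivity)] at hcoord
    have hge1 : (1:ℝ) ≤ |(m:ℝ) - (m':ℝ)| := by
      rw [show ((m:ℝ) - (m':ℝ)) = ((m - m' : ℤ) : ℝ) by push_cast; ring, ← Int.cast_abs]
      exact_mod_cast Int.one_le_abs (by omega)
    nlinarith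
  subst hmm
  rw [mem_layer_iff] at hm hm'
  have hgrid : p - p' ∈ engelGrid d a := by
    have he : p - p' = (p - engelOffset d A b δ m) - (p' - engelOffset d A b δ m) := by abel
    rw [he]
    exact grid_sub_mem hm hm'
  have hnorm : ‖p - p'‖ = 2 * a := by rw [← dist_eq_norm, hdist]
  exact grid_norm_2a ha hgrid hnorm

end DistStruct

/-! ### Classification of isometries between Engel sets -/

section Class

variable {d : ℕ} {a b δ : ℝ}

lemma single_mem_grid (ha : 0 < a) {j : Fin d} (hj : (j:ℕ) < d - 1) :
    EuclideanSpace.single j (2*a) ∈ engelGrid d a := by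
  intro k
  constructor
  · intro _
    by_cases hk : k = j
    · exact ⟨1, by rw [EuclideanSpace.single_apply, if_pos hk]; norm_num⟩
    · exact ⟨0, by rw [EuclideanSpace.single_apply, if_neg hk]; norm_num⟩
  · intro hk
    rw [EuclideanSpace.single_apply, if_neg (fun hc => by rw [hc] at hk; omega)]

lemma engelSet_add_grid {A : ℤ → ℤ} {x v : Euc d} (hx : x ∈ engelSet d A a b δ)
    (hv : v ∈ engelGrid d a) : x + v ∈ engelSet d A a b δ := by
  obtain ⟨m, hm⟩ := mem_engelSet_iff.1 hx
  apply mem_engelSet_iff.2 ⟨m, ?_⟩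
  rw [mem_layer_iff] at hm ⊢
  have he : x + v - engelOffset d A b δ m = (x - engelOffset d A b δ m) + v := by abel
  rw [he]
  exact grid_add_mem hm hv

lemma zero_mem_engelSet {A : ℤ → ℤ} : (0 : Euc d) ∈ engelSet d A a b δ :=
  mem_engelSet_iff.2 ⟨0, by rw [mem_layer_iff, engelOffset_zero, sub_zero]; exact grid_zero_mem⟩

set_option maxHeartbeats 1000000 in
lemma engel_class (hd : 2 ≤ d) {A A' : ℤ → ℤ} (hA : EngelSeq d A) (hA' : EngelSeq d A')
    (hδ : 0 < δ) (hδa : δ < a) (hab : a < b)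
    (g : Euc d ≃ᵢ Euc d) (hg : g '' engelSet d A a b δ = engelSet d A' a b δ) :
    ∃ (F : Euc d ≃ₗᵢ[ℝ] Euc d) (κ : ℤ),
      (g 0 ∈ engelLayer d A' a b δ (2*κ) ∧
        ∀ i : ℤ, F (engelU d A i) = engelU d A' (i + κ)) ∨
      (g 0 ∈ engelLayer d A' a b δ (2*κ+1) ∧
        ∀ i : ℤ, F (engelU d A i) = -engelU d A' (κ + 1 - i)) := by
  classical
  have ha : 0 < a := lt_trans hδ hδa
  have hb : 0 < b := lt_trans ha hab
  set F := g.toRealLinearIsometryEquiv with hFdef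
  have hFx : ∀ x, F x = g x - g 0 := fun x => g.toRealLinearIsometryEquiv_apply x
  clear hFdef
  clear_value F
  have hmem : ∀ x ∈ engelSet d A a b δ, g x ∈ engelSet d A' a b δ := by
    intro x hx
    rw [← hg]
    exact Set.mem_image_of_mem _ hx
  -- Step 1: F sends horizontal 2a-steps to horizontal 2a-steps
  have hF2a : ∀ j : Fin d, (j:ℕ) < d - 1 → ∃ k : Fin d, (k:ℕ) < d - 1 ∧
      (F (EuclideanSpace.single j (2*a)) = EuclideanSpace.single k (2*a) ∨
       F (EuclideanSpace.single j (2*a)) = -EuclideanSpace.single k (2*a)) := by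
    intro j hj
    have h1 : (EuclideanSpace.single j (2*a) : Euc d) ∈ engelSet d A a b δ := by
      have := engelSet_add_grid (zero_mem_engelSet (A := A) (a := a) (b := b) (δ := δ))
        (single_mem_grid ha hj)
      rwa [zero_add] at this
    have hdist : dist (g (EuclideanSpace.single j (2*a))) (g 0) = 2*a := by
      rw [g.dist_eq, dist_eq_norm, sub_zero, EuclideanSpace.norm_single, Real.norm_eq_abs,
        abs_of_pos (by positivity)]
    obtain ⟨k, hk, hcase⟩ := dist_2a_struct hA' hd ha hb hab (hmem _ h1)
      (hmem _ (zero_mem_engelSet)) hdist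
    rw [← hFx] at hcase
    exact ⟨k, hk, hcase⟩
  -- helpers about singles
  have hsing : ∀ j j' : Fin d, (EuclideanSpace.single j (2*a) : Euc d)
      = EuclideanSpace.single j' (2*a) → j = j' := by
    intro j j' hjj
    by_contra hne
    have hval : (EuclideanSpace.single j (2*a) : Euc d) j
        = EuclideanSpace.single j' (2*a) j := by rw [hjj]
    rw [EuclideanSpace.single_apply, EuclideanSpace.single_apply, if_pos rfl,
      if_neg (fun hc => hne hc)] at hval
    linarith
  have hsing2 : ∀ j j' : Fin d, (EuclideanSpace.single j (2*a) : Euc d)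
      = -EuclideanSpace.single j' (2*a) → False := by
    intro j j' hjj
    have hval : (EuclideanSpace.single j (2*a) : Euc d) j
        = (-EuclideanSpace.single j' (2*a) : Euc d) j := by rw [hjj]
    rw [EuclideanSpace.single_apply, if_pos rfl,
      show (-EuclideanSpace.single j' (2*a) : Euc d) j
        = -(EuclideanSpace.single j' (2*a) j) from rfl, EuclideanSpace.single_apply] at hval
    split_ifs at hval <;> linarith
  -- Step 2: the vertical coordinate
  set lastd : Fin d := ⟨d-1, by omega⟩ with hlastd
  have hch : ∀ j : Fin d, ∃ k : Fin d, ((j:ℕ) < d - 1 → ((k:ℕ) < d-1 ∧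
      (F (EuclideanSpace.single j (2*a)) = EuclideanSpace.single k (2*a) ∨
       F (EuclideanSpace.single j (2*a)) = -EuclideanSpace.single k (2*a)))) := by
    intro j
    by_cases hj : (j:ℕ) < d - 1
    · obtain ⟨k, hk1, hk2⟩ := hF2a j hj
      exact ⟨k, fun _ => ⟨hk1, hk2⟩⟩
    · exact ⟨j, fun h => absurd h hj⟩
  choose K hK using hch
  have heKinj : Function.Injective
      (fun j : {j : Fin d // (j:ℕ) < d - 1} => (⟨K j, (hK j j.2).1⟩ : {k : Fin d // (k:ℕ) < d - 1})) := by
    rintro ⟨j, hj⟩ ⟨j', hj'⟩ h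
    simp only [Subtype.mk.injEq] at h ⊢
    rcases (hK j hj).2 with e1 | e1 <;> rcases (hK j' hj').2 with e2 | e2
    · rw [h] at e1
      exact hsing j j' (F.injective (e1.trans e2.symm))
    · rw [h] at e1
      exfalso
      apply hsing2 j j'
      apply F.injective
      rw [map_neg, e1, e2, neg_neg]
    · rw [h] at e1
      exfalso
      apply hsing2 j' j
      apply F.injective
      rw [map_neg, e2, e1, neg_neg]
    · rw [h] at e1
      have := F.injective (e1.trans e2.symm)
      exact hsing j j' this
  have hKsurj := Finite.injective_iff_surjective.1 heKinj
  have hFeD0 : ∀ k : Fin d, (k:ℕ) < d - 1 → F (EuclideanSpace.single lastd (1:ℝ)) k = 0 := by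
    intro k hk
    obtain ⟨⟨j, hj⟩, hKj⟩ := hKsurj ⟨k, hk⟩
    have hKjk : K j = k := congrArg Subtype.val hKj
    have hinner : (inner ℝ (F (EuclideanSpace.single lastd (1:ℝ)))
          (F (EuclideanSpace.single j (2*a))) : ℝ)
        = inner ℝ (EuclideanSpace.single lastd (1:ℝ)) (EuclideanSpace.single j (2*a)) :=
      F.inner_map_map _ _
    have hjne : j ≠ lastd := by
      intro hc
      rw [hc] at hj
      simp only [hlastd] at hj
      omega
    have hz : (inner ℝ (EuclideanSpace.single lastd (1:ℝ))
        (EuclideanSpace.single j (2*a)) : ℝ) = 0 := by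
      rw [EuclideanSpace.inner_single_right]
      have : (EuclideanSpace.single lastd (1:ℝ)) j = 0 := by
        rw [EuclideanSpace.single_apply, if_neg hjne]
      rw [this]
      simp
    rw [hz] at hinner
    rcases (hK j hj).2 with e1 | e1 <;> rw [e1, hKjk] at hinner
    · rw [EuclideanSpace.inner_single_right] at hinner
      simp only [starRingEnd_apply, star_trivial] at hinner
      rcases mul_eq_zero.1 hinner with h' | h'
      · exfalso; linarith
      · exact h'
    · rw [inner_neg_right, EuclideanSpace.inner_single_right] at hinner
      simp only [starRingEnd_apply, star_trivial, neg_eq_zero] at hinner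
      rcases mul_eq_zero.1 hinner with h' | h'
      · exfalso; linarith
      · exact h'
  set sD : ℝ := F (EuclideanSpace.single lastd (1:ℝ)) lastd with hsDdef
  have hsDsq : sD^2 = 1 := by
    have hnF : ‖F (EuclideanSpace.single lastd (1:ℝ))‖ = 1 := by
      rw [F.norm_map, EuclideanSpace.norm_single]
      norm_num
    have h2 : ‖F (EuclideanSpace.single lastd (1:ℝ))‖^2
        = ∑ i, ‖F (EuclideanSpace.single lastd (1:ℝ)) i‖^2 := by
      rw [EuclideanSpace.norm_eq, Real.sq_sqrt (Finset.sum_nonneg fun i _ => sq_nonneg _)]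
    rw [hnF] at h2
    have h3 : ∑ i, ‖F (EuclideanSpace.single lastd (1:ℝ)) i‖^2 = ‖sD‖^2 := by
      apply Finset.sum_eq_single lastd
      · intro i _ hine
        have : (i:ℕ) < d - 1 := by
          have h4 := i.2
          have : (i:ℕ) ≠ d - 1 := fun hc => hine (Fin.ext hc)
          omega
        rw [hFeD0 i this, norm_zero]
        norm_num
      · intro h; exact absurd (Finset.mem_univ _) h
    rw [h3, Real.norm_eq_abs, sq_abs, one_pow] at h2
    exact h2.symm
  have hsD1 : sD = 1 ∨ sD = -1 := by
    have h2 : (sD - 1) * (sD + 1) = 0 := by linear_combination hsDsq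
    rcases mul_eq_zero.1 h2 with h3 | h3
    · left; linarith
    · right; linarith
  have hFeDvec : F (EuclideanSpace.single lastd (1:ℝ))
      = sD • (EuclideanSpace.single lastd (1:ℝ) : Euc d) := by
    ext k
    show _ = sD * (EuclideanSpace.single lastd (1:ℝ) k)
    by_cases hk : (k:ℕ) < d - 1
    · rw [hFeD0 k hk, EuclideanSpace.single_apply,
        if_neg (fun hc => by rw [hc] at hk; simp only [hlastd] at hk; omega)]
      ring
    · have : k = lastd := Fin.ext (by have := k.2; simp only [hlastd]; omega)
      rw [this, EuclideanSpace.single_apply, if_pos rfl, mul_one]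
  have hFlast : ∀ v : Euc d, F v lastd = sD * v lastd := by
    intro v
    have h1 : (inner ℝ (F v) (F (EuclideanSpace.single lastd (1:ℝ))) : ℝ)
        = inner ℝ v (EuclideanSpace.single lastd (1:ℝ)) := F.inner_map_map _ _
    rw [hFeDvec, inner_smul_right, EuclideanSpace.inner_single_right,
      EuclideanSpace.inner_single_right] at h1
    simp only [starRingEnd_apply, star_trivial, one_mul] at h1
    rcases hsD1 with h' | h' <;> rw [h'] at h1 ⊢ <;> linarith
  -- Step 3: the layer map
  have hXheight : ∀ x ∈ engelSet d A' a b δ, ∃ m : ℤ,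
      x lastd = 2*b*(m:ℝ) ∧ x ∈ engelLayer d A' a b δ m := by
    intro x hx
    obtain ⟨m, hm⟩ := mem_engelSet_iff.1 hx
    exact ⟨m, layer_height hA' hd hm lastd rfl, hm⟩
  obtain ⟨k₀, hk₀h, hk₀⟩ := hXheight (g 0) (hmem 0 zero_mem_engelSet)
  obtain ⟨s, hs1, hsval⟩ : ∃ s : ℤ, (s = 1 ∨ s = -1) ∧ sD = (s:ℝ) := by
    rcases hsD1 with h' | h'
    · exact ⟨1, Or.inl rfl, by rw [h']; norm_num⟩
    · exact ⟨-1, Or.inr rfl, by rw [h']; norm_num⟩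
  have Hlay : ∀ m : ℤ, g (engelOffset d A b δ m) ∈ engelLayer d A' a b δ (s*m + k₀) := by
    intro m
    have hoffX : engelOffset d A b δ m ∈ engelSet d A a b δ :=
      mem_engelSet_iff.2 ⟨m, offset_mem_layer⟩
    obtain ⟨m₁, hm₁h, hm₁⟩ := hXheight _ (hmem _ hoffX)
    have hgoff : g (engelOffset d A b δ m) = F (engelOffset d A b δ m) + g 0 := by
      rw [hFx]; abel
    have hht : g (engelOffset d A b δ m) lastd = sD * (2*b*(m:ℝ)) + g 0 lastd := by
      rw [hgoff, show (F (engelOffset d A b δ m) + g 0) lastd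
          = F (engelOffset d A b δ m) lastd + g 0 lastd from rfl, hFlast,
        engelOffset_last hA hd m lastd rfl]
    have hmb : m₁ = s*m + k₀ := by
      have hb2 : (0:ℝ) < 2*b := by positivity
      have hreal : (m₁:ℝ) = (s:ℝ)*(m:ℝ) + (k₀:ℝ) := by
        rw [hm₁h] at hht
        rw [hk₀h, hsval] at hht
        have hlin : (2*b)*(m₁:ℝ) = (2*b)*((s:ℝ)*(m:ℝ) + (k₀:ℝ)) := by
          rw [mul_add]
          nlinarith [hht]
        exact mul_left_cancel₀ (ne_of_gt hb2) hlin
      exact_mod_cast hreal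
    rw [hmb] at hm₁
    exact hm₁
  have HΦ : ∀ m : ℤ, F (engelOffset d A b δ m) + g 0
      - engelOffset d A' b δ (s*m+k₀) ∈ engelGrid d a := by
    intro m
    have h1 := Hlay m
    rw [mem_layer_iff] at h1
    have he : g (engelOffset d A b δ m) - engelOffset d A' b δ (s*m+k₀)
        = F (engelOffset d A b δ m) + g 0 - engelOffset d A' b δ (s*m+k₀) := by
      rw [hFx]; abel
    rwa [he] at h1
  have hFeD2 : F (eVec d d) = sD • eVec d d := by
    have heq : (eVec d d : Euc d) = EuclideanSpace.single lastd (1:ℝ) := by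
      rw [eVec, dif_pos (show d - 1 < d by omega)]
    rw [heq]
    exact hFeDvec
  have Hdiff : ∀ m m' : ℤ, δ • F (engelCum d A (m/2)) - δ • engelCum d A' ((s*m+k₀)/2)
      - (δ • F (engelCum d A (m'/2)) - δ • engelCum d A' ((s*m'+k₀)/2)) ∈ engelGrid d a := by
    intro m m'
    have h1 := grid_sub_mem (HΦ m) (HΦ m')
    have he : (F (engelOffset d A b δ m) + g 0 - engelOffset d A' b δ (s*m+k₀))
        - (F (engelOffset d A b δ m') + g 0 - engelOffset d A' b δ (s*m'+k₀))
        = δ • F (engelCum d A (m/2)) - δ • engelCum d A' ((s*m+k₀)/2)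
          - (δ • F (engelCum d A (m'/2)) - δ • engelCum d A' ((s*m'+k₀)/2)) := by
      rw [engelOffset, engelOffset, engelOffset, engelOffset]
      simp only [map_add, map_smul]
      rw [hFeD2, hsval]
      push_cast
      module
    rwa [he] at h1
  have Hcancel : ∀ (v w : Euc d), ‖v‖ = 1 → ‖w‖ = 1 →
      δ • v - δ • w ∈ engelGrid d a → v = w := by
    intro v w hv hw hmem2
    have hsmall : ∀ j : Fin d, |(δ • v - δ • w : Euc d) j| < 2 * a := by
      intro j
      have h1 : (δ • v - δ • w : Euc d) j = δ * v j - δ * w j := rfl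
      have h2 := abs_coord_le_norm v j
      have h3 := abs_coord_le_norm w j
      rw [hv] at h2; rw [hw] at h3
      rw [h1]
      have habs : |δ * v j - δ * w j| ≤ |δ * v j| + |δ * w j| := abs_sub _ _
      rw [abs_mul, abs_mul, abs_of_pos hδ] at habs
      have hv1 := abs_nonneg (v j)
      have hw1 := abs_nonneg (w j)
      nlinarith
    have h0 : δ • v - δ • w = 0 := grid_small ha hmem2 hsmall
    have h1 : δ • v = δ • w := by
      have := sub_eq_zero.1 h0
      exact this
    exact smul_right_injective (Euc d) (ne_of_gt hδ) h1
  have HcancelNZ : ∀ (v : Euc d) (c : ℝ), (c = δ ∨ c = -δ) → ‖v‖ = 1 →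
      c • v ∈ engelGrid d a → False := by
    intro v c hc hv hmem2
    have hsmall : ∀ j : Fin d, |(c • v : Euc d) j| < 2 * a := by
      intro j
      have h1 : (c • v : Euc d) j = c * v j := rfl
      have h2 := abs_coord_le_norm v j
      rw [hv] at h2
      rw [h1, abs_mul]
      have hcabs : |c| = δ := by
        rcases hc with h | h
        · rw [h]; exact abs_of_pos hδ
        · rw [h, abs_neg]; exact abs_of_pos hδ
      rw [hcabs]
      have := abs_nonneg (v j)
      nlinarith
    have h0 : c • v = 0 := grid_small ha hmem2 hsmall
    rcases smul_eq_zero.1 h0 with h' | h'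
    · rcases hc with h | h <;> rw [h] at h' <;> linarith [h']
    · rw [h'] at hv
      rw [norm_zero] at hv
      norm_num at hv
  -- the cum-succ helper
  have hcs : ∀ (B : ℤ → ℤ) (i : ℤ), engelCum d B i = engelCum d B (i-1) + engelU d B i := by
    intro B i
    have := engelCum_succ (A := B) (d := d) (i-1)
    rwa [sub_add_cancel] at this
  -- Step 4: parity analysis
  rcases hs1 with hsgn | hsgn
  · -- s = 1
    subst hsgn
    rcases Int.even_or_odd k₀ with ⟨t, ht⟩ | ⟨t, ht⟩
    · -- k₀ even: conclusion, κ := t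
      refine ⟨F, t, Or.inl ⟨by rw [show 2*t = k₀ by omega]; exact hk₀, ?_⟩⟩
      intro i
      have h1 := Hdiff (2*i) (2*(i-1))
      rw [show (2*i)/2 = i by omega, show (2*(i-1))/2 = i-1 by omega,
        show ((1:ℤ)*(2*i)+k₀)/2 = i + t by omega,
        show ((1:ℤ)*(2*(i-1))+k₀)/2 = (i + t) - 1 by omega] at h1
      rw [hcs A i, hcs A' (i+t), map_add] at h1
      have he : δ • (F (engelCum d A (i-1)) + F (engelU d A i))
          - δ • (engelCum d A' (i+t-1) + engelU d A' (i+t))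
          - (δ • F (engelCum d A (i-1)) - δ • engelCum d A' (i+t-1))
          = δ • F (engelU d A i) - δ • engelU d A' (i+t) := by module
      rw [show (i:ℤ) + t - 1 = i + t - 1 by ring] at h1
      rw [he] at h1
      exact Hcancel _ _ (by rw [F.norm_map]; exact engelU_norm hA i) (engelU_norm hA' (i+t)) h1
    · -- k₀ odd: contradiction
      exfalso
      have h1 := Hdiff 1 0
      rw [show (1:ℤ)/2 = 0 by omega, show ((1:ℤ)*1+k₀)/2 = t+1 by omega,
        show ((0:ℤ))/2 = 0 by omega, show ((1:ℤ)*0+k₀)/2 = t by omega] at h1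
      rw [hcs A' (t+1), show (t:ℤ)+1-1 = t by ring] at h1
      have he : δ • F (engelCum d A 0) - δ • (engelCum d A' t + engelU d A' (t+1))
          - (δ • F (engelCum d A 0) - δ • engelCum d A' t)
          = (-δ) • engelU d A' (t+1) := by module
      rw [he] at h1
      exact HcancelNZ _ _ (Or.inr rfl) (engelU_norm hA' (t+1)) h1
  · -- s = -1
    subst hsgn
    rcases Int.even_or_odd k₀ with ⟨t, ht⟩ | ⟨t, ht⟩
    · -- k₀ even: contradiction
      exfalso
      have h1 := Hdiff 1 0
      rw [show (1:ℤ)/2 = 0 by omega, show ((-1:ℤ)*1+k₀)/2 = t-1 by omega,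
        show ((0:ℤ))/2 = 0 by omega, show ((-1:ℤ)*0+k₀)/2 = t by omega] at h1
      rw [hcs A' t] at h1
      have he : δ • F (engelCum d A 0) - δ • engelCum d A' (t-1)
          - (δ • F (engelCum d A 0) - δ • (engelCum d A' (t-1) + engelU d A' t))
          = δ • engelU d A' t := by module
      rw [he] at h1
      exact HcancelNZ _ _ (Or.inl rfl) (engelU_norm hA' t) h1
    · -- k₀ odd: conclusion, κ := t
      refine ⟨F, t, Or.inr ⟨by rw [show 2*t+1 = k₀ by omega]; exact hk₀, ?_⟩⟩
      intro i
      have h1 := Hdiff (2*i) (2*(i-1))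
      rw [show (2*i)/2 = i by omega, show (2*(i-1))/2 = i-1 by omega,
        show ((-1:ℤ)*(2*i)+k₀)/2 = t - i by omega,
        show ((-1:ℤ)*(2*(i-1))+k₀)/2 = t - i + 1 by omega] at h1
      rw [hcs A i, hcs A' (t-i+1), map_add, show (t:ℤ)-i+1-1 = t-i by ring] at h1
      have he : δ • (F (engelCum d A (i-1)) + F (engelU d A i))
          - δ • engelCum d A' (t-i)
          - (δ • F (engelCum d A (i-1)) - δ • (engelCum d A' (t-i) + engelU d A' (t-i+1)))
          = δ • F (engelU d A i) - δ • (-engelU d A' (t-i+1)) := by module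
      rw [he] at h1
      have hres := Hcancel _ _ (by rw [F.norm_map]; exact engelU_norm hA i)
        (by rw [norm_neg]; exact engelU_norm hA' (t-i+1)) h1
      rw [hres, show (t:ℤ)-i+1 = t+1-i by ring]

end Class

/-! ### Final assembly -/

section Final

variable {d : ℕ} {a b δ : ℝ}

lemma engelU_shift_one {A : ℤ → ℤ} (hp : ∀ i : ℤ, A (i + ((d:ℤ) - 1)) = A i) :
    ∀ i : ℤ, engelU d A (i + ((d:ℤ) - 1)) = (1:ℝ) • engelU d A i := by
  intro i
  rw [engelU, engelU, hp i, one_smul]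

lemma engelU_shift_negone {A : ℤ → ℤ} (hA : EngelSeq d A)
    (hn : ∀ i : ℤ, A (i + ((d:ℤ) - 1)) = -A i) :
    ∀ i : ℤ, engelU d A (i + ((d:ℤ) - 1)) = (-1:ℝ) • engelU d A i := by
  intro i
  have h0 : A i ≠ 0 := by
    intro hc
    have := (hA.1 i).1
    rw [hc] at this
    simp at this
  rw [engelU, engelU, hn i, Int.natAbs_neg, smul_smul]
  congr 1
  rcases lt_trichotomy (A i) 0 with hlt | heq | hgt
  · rw [if_pos (by omega), if_neg (by omega)]; norm_num
  · exact absurd heq h0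
  · rw [if_neg (by omega), if_pos hgt]; norm_num

lemma engelSet_congr {A A' : ℤ → ℤ} (h : ∀ i : ℤ, engelU d A i = engelU d A' i) :
    engelSet d A a b δ = engelSet d A' a b δ := by
  have hcum : ∀ i : ℤ, engelCum d A i = engelCum d A' i := by
    intro i
    rw [engelCum, engelCum]
    split_ifs
    · exact Finset.sum_congr rfl fun j _ => h _
    · congr 1
      exact Finset.sum_congr rfl fun j _ => h _
  have hoff : ∀ m : ℤ, engelOffset d A b δ m = engelOffset d A' b δ m := by
    intro m
    rw [engelOffset, engelOffset, hcum]
  unfold engelSet engelLayer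
  apply Set.iUnion_congr
  intro m
  rw [hoff]

lemma u_ext (hd : 2 ≤ d) {A B : ℤ → ℤ} {ε : ℝ} (hε : ε = 1 ∨ ε = -1)
    (hperA : ∀ i : ℤ, engelU d A (i + ((d:ℤ) - 1)) = ε • engelU d A i)
    (hperB : ∀ i : ℤ, engelU d B (i + ((d:ℤ) - 1)) = ε • engelU d B i)
    (hagree : ∀ r : ℤ, 1 ≤ r → r ≤ (d:ℤ) - 1 → engelU d A r = engelU d B r) :
    ∀ i : ℤ, engelU d A i = engelU d B i := by
  intro i
  obtain ⟨r, hr1, hr2, n, hn⟩ := exists_residue hd i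
  rw [hn, u_shift hε hperA, u_shift hε hperB, hagree r hr1 hr2]

lemma smul_cancel_vec {c c' : ℝ} {v : Euc d} (hv : v ≠ 0) (h : c • v = c' • v) : c = c' := by
  have h2 : (c - c') • v = 0 := by rw [sub_smul, h, sub_self]
  rcases smul_eq_zero.1 h2 with h3 | h3
  · linarith [h3]
  · exact absurd h3 hv

lemma neg_self_zero {v : Euc d} (h : v = -v) : v = 0 := by
  have h2 : v + v = 0 := by nth_rewrite 2 [h]; simp
  have h3 : (2:ℝ) • v = 0 := by rw [two_smul]; exact h2
  rcases smul_eq_zero.1 h3 with h4 | h4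
  · norm_num at h4
  · exact h4

end Final

/-- Corollary 5.7: among all Engel sets `X(A,a,b,δ)` for sequences `A`
with the same initial terms `a₁, …, a_{d-1}`, there are up to isometry exactly two
regular systems, namely those with `a_{i+d-1} = a_i` for all `i` and with
`a_{i+d-1} = -a_i` for all `i`; moreover these two sets are not congruent. -/
theorem engelSet_two_regular (d : ℕ) (hd : 2 ≤ d)
    (a b δ : ℝ) (hδ : 0 < δ) (hδa : δ < a) (hab : a < b)
    (Ap An : ℤ → ℤ) (hAp : EngelSeq d Ap) (hAn : EngelSeq d An)
    (hsame : ∀ i : ℤ, 1 ≤ i → i ≤ (d : ℤ) - 1 → Ap i = An i)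
    (hp : ∀ i : ℤ, Ap (i + ((d : ℤ) - 1)) = Ap i)
    (hn : ∀ i : ℤ, An (i + ((d : ℤ) - 1)) = -An i) :
    IsRegularSystem (engelSet d Ap a b δ) ∧
    IsRegularSystem (engelSet d An a b δ) ∧
    (¬ ∃ g : Euc d ≃ᵢ Euc d, g '' engelSet d Ap a b δ = engelSet d An a b δ) ∧
    (∀ A : ℤ → ℤ, EngelSeq d A → (∀ i : ℤ, 1 ≤ i → i ≤ (d : ℤ) - 1 → A i = Ap i) →
      IsRegularSystem (engelSet d A a b δ) →
      (∃ g : Euc d ≃ᵢ Euc d, g '' engelSet d A a b δ = engelSet d Ap a b δ) ∨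
      (∃ g : Euc d ≃ᵢ Euc d, g '' engelSet d A a b δ = engelSet d An a b δ)) := by

  have hperp : ∀ i : ℤ, engelU d Ap (i + ((d:ℤ) - 1)) = (1:ℝ) • engelU d Ap i :=
    engelU_shift_one hp
  have hpern : ∀ i : ℤ, engelU d An (i + ((d:ℤ) - 1)) = (-1:ℝ) • engelU d An i :=
    engelU_shift_negone hAn hn
  refine ⟨engel_regular hd hAp (Or.inl rfl) hperp,
          engel_regular hd hAn (Or.inr rfl) hpern, ?_, ?_⟩
  · -- the two sets are not congruent
    rintro ⟨g, hg⟩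
    obtain ⟨F, κ, hcase⟩ := engel_class hd hAp hAn hδ hδa hab g hg
    have hUAp : engelU d Ap (0 + ((d:ℤ)-1)) = engelU d Ap 0 := by rw [hperp, one_smul]
    rcases hcase with ⟨_, hFu⟩ | ⟨_, hFu⟩
    · have e1 := hFu 0
      have e2 := hFu (0 + ((d:ℤ)-1))
      rw [hUAp, e1] at e2
      -- e2 : engelU d An (0 + κ) = engelU d An (0 + (d-1) + κ)
      have e3 := hpern (0 + κ)
      rw [show (0:ℤ) + κ + ((d:ℤ)-1) = 0 + ((d:ℤ)-1) + κ by ring, ← e2] at e3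
      have : engelU d An (0 + κ) = 0 := neg_self_zero (by rw [neg_one_smul] at e3; exact e3)
      exact engelU_ne_zero hAn hd (0 + κ) this
    · have e1 := hFu 0
      have e2 := hFu (0 + ((d:ℤ)-1))
      rw [hUAp, e1, neg_inj] at e2
      -- e2 : engelU d An (κ+1-0) = engelU d An (κ+1-(0+(d-1)))
      have e3 := hpern (κ + 1 - (0 + ((d:ℤ)-1)))
      rw [show κ + 1 - (0 + ((d:ℤ)-1)) + ((d:ℤ)-1) = κ + 1 - 0 by ring, neg_one_smul] at e3
      have : engelU d An (κ + 1 - 0) = 0 :=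
        neg_self_zero (by nth_rewrite 2 [e2]; exact e3)
      exact engelU_ne_zero hAn hd _ this
  · -- uniqueness
    intro A hA hsame2 hreg
    -- the sign sequence of A
    have hc : ∀ i : ℤ, ∃ c : ℝ, (c = 1 ∨ c = -1) ∧
        engelU d A (i + ((d:ℤ)-1)) = c • engelU d A i := by
      intro i
      set s1 : ℝ := if 0 < A (i + ((d:ℤ)-1)) then 1 else -1 with hs1
      set s2 : ℝ := if 0 < A i then 1 else -1 with hs2
      have hs2sq : s2 * s2 = 1 := by rw [hs2]; split_ifs <;> norm_num
      refine ⟨s1 * s2, ?_, ?_⟩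
      · rw [hs1, hs2]; split_ifs <;> norm_num
      · rw [engelU, engelU, hA.2.1 i, ← hs1, ← hs2, smul_smul]
        congr 1
        rw [mul_assoc, hs2sq, mul_one]
    choose c hc1 hc2 using hc
    -- regularity forces the sign sequence to be shift invariant
    have hshift : ∀ n : ℤ, ∀ i : ℤ, c (i + n) = c i := by
      intro n i
      obtain ⟨g, hgX, hg0⟩ := hreg 0 zero_mem_engelSet (engelOffset d A b δ (2*n))
        (mem_engelSet_iff.2 ⟨2*n, offset_mem_layer⟩)
      obtain ⟨F, κ, hcase⟩ := engel_class hd hA hA hδ hδa hab g hgX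
      rcases hcase with ⟨hmem2, hFu⟩ | ⟨hmem2, hFu⟩
      · -- κ = n
        rw [hg0] at hmem2
        have hκ : 2*κ = 2*n := layer_unique hA hd (lt_trans (lt_trans hδ hδa) hab)
          hmem2 offset_mem_layer
        have hκn : κ = n := by omega
        subst hκn
        -- transport the sign relation
        have h1 := hc2 (i + κ)
        have h2 : engelU d A (i + κ + ((d:ℤ)-1)) = c i • engelU d A (i + κ) := by
          have h3 := hFu (i + ((d:ℤ)-1))
          rw [hc2 i, map_smul, hFu i] at h3
          rw [show i + κ + ((d:ℤ)-1) = i + ((d:ℤ)-1) + κ by ring, h3]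
        have hne := engelU_ne_zero hA hd (i + κ)
        exact smul_cancel_vec hne (h1.symm.trans h2)
      · exfalso
        rw [hg0] at hmem2
        have hκ : 2*κ+1 = 2*n := layer_unique hA hd (lt_trans (lt_trans hδ hδa) hab)
          hmem2 offset_mem_layer
        omega
    have hcconst : ∀ i : ℤ, c i = c 0 := by
      intro i
      have := hshift i 0
      rwa [zero_add] at this
    have hArep : ∀ r : ℤ, 1 ≤ r → r ≤ (d:ℤ) - 1 → engelU d A r = engelU d Ap r := by
      intro r h1 h2
      rw [engelU, engelU, hsame2 r h1 h2]
    rcases hc1 0 with h0 | h0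
    · -- A is congruent to Ap
      left
      have hperA : ∀ i : ℤ, engelU d A (i + ((d:ℤ)-1)) = (1:ℝ) • engelU d A i := by
        intro i
        rw [hc2 i, hcconst i, h0]
      refine ⟨IsometryEquiv.refl _, ?_⟩
      rw [show ⇑(IsometryEquiv.refl (Euc d)) = id from rfl, Set.image_id]
      exact engelSet_congr (u_ext hd (Or.inl rfl) hperA hperp hArep)
    · -- A is congruent to An
      right
      have hperA : ∀ i : ℤ, engelU d A (i + ((d:ℤ)-1)) = (-1:ℝ) • engelU d A i := by
        intro i
        rw [hc2 i, hcconst i, h0]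
      have hArepn : ∀ r : ℤ, 1 ≤ r → r ≤ (d:ℤ) - 1 → engelU d A r = engelU d An r := by
        intro r h1 h2
        rw [engelU, engelU, hsame2 r h1 h2, hsame r h1 h2]
      refine ⟨IsometryEquiv.refl _, ?_⟩
      rw [show ⇑(IsometryEquiv.refl (Euc d)) = id from rfl, Set.image_id]
      exact engelSet_congr (u_ext hd (Or.inr rfl) hperA hpern hArepn)
end
end
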